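/- arXiv:2209.15230 — 3 statements merged into one kernel-verified Lean document; each statement's English description precedes it below -/
import Mathlib

section
/- If v and w are pure profiles of a finite game and there is a directed path from v to w in the response graph, then under the replicator flow there is a pseudo-orbit from v to w (viewing pure profiles as vertices of the product of simplices). -/
open Finset

/-- Insert strategy `s` for player `p` into the antiprofile `q`. -/
def insertStrat {N : ℕ} {S : Fin N → Type*} (p : Fin N) (s : S p)
    (q : ∀ j : {j : Fin N // j ≠ p}, S j) : ∀ j, S j :=
  fun j => if h : j = p then cast (congrArg S h).symm s else q ⟨j, h⟩

/-- Expected utility to player `p` of playing pure strategy `s` against the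
mixed antiprofile of `x`. -/
def Upure {N : ℕ} {S : Fin N → Type*} [∀ i, Fintype (S i)]
    (u : (∀ j, S j) → Fin N → ℝ) (x : ∀ j, S j → ℝ) (p : Fin N) (s : S p) : ℝ :=
  ∑ q : (∀ j : {j : Fin N // j ≠ p}, S j),
    (∏ j : {j : Fin N // j ≠ p}, x j (q j)) * u (insertStrat p s q) p

/-- The replicator vector field. -/
def replicator {N : ℕ} {S : Fin N → Type*} [∀ i, Fintype (S i)]
    (u : (∀ j, S j) → Fin N → ℝ) (x : ∀ j, S j → ℝ) (p : Fin N) (s : S p) : ℝ :=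
  x p s * (Upure u x p s - ∑ t : S p, x p t * Upure u x p t)

/-- `x` is a mixed profile. -/
def MixedProfile {N : ℕ} {S : Fin N → Type*} [∀ i, Fintype (S i)]
    (x : ∀ j, S j → ℝ) : Prop :=
  (∀ i (s : S i), 0 ≤ x i s) ∧ ∀ i, ∑ s : S i, x i s = 1

/-- The pure profile `v` viewed as a vertex of the product of simplices. -/
def vertex {N : ℕ} {S : Fin N → Type*} [∀ i, DecidableEq (S i)]
    (v : ∀ j, S j) : ∀ j, S j → ℝ :=
  fun j s => if s = v j then 1 else 0

/-- Two profiles are `i`-comparable if they differ only in player `i`'s strategy. -/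
def IComparable {N : ℕ} {S : Fin N → Type*} (i : Fin N) (p q : ∀ j, S j) : Prop :=
  p i ≠ q i ∧ ∀ j, j ≠ i → p j = q j

/-- Arc of the response graph: `p → q` when `p, q` are `i`-comparable and
`u_i(p) ≤ u_i(q)`. -/
def ResponseArc {N : ℕ} {S : Fin N → Type*}
    (u : (∀ j, S j) → Fin N → ℝ) (p q : ∀ j, S j) : Prop :=
  ∃ i, IComparable i p q ∧ u p i ≤ u q i

/-- An `(ε, T)`-chain from `x` to `y` under `φ`. -/
def IsETChain {N : ℕ} {S : Fin N → Type*} [∀ i, Fintype (S i)]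
    (φ : (∀ j, S j → ℝ) → ℝ → (∀ j, S j → ℝ)) (ε T : ℝ)
    (x y : ∀ j, S j → ℝ) : Prop :=
  ∃ (n : ℕ) (z : ℕ → (∀ j, S j → ℝ)) (t : ℕ → ℝ), 1 ≤ n ∧ z 0 = x ∧ z n = y ∧
    ∀ i < n, T ≤ t i ∧ dist (φ (z i) (t i)) (z (i + 1)) < ε

/-- A pseudo-orbit from `x` to `y`. -/
def Pseudo {N : ℕ} {S : Fin N → Type*} [∀ i, Fintype (S i)]
    (φ : (∀ j, S j → ℝ) → ℝ → (∀ j, S j → ℝ)) (x y : ∀ j, S j → ℝ) : Prop :=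
  ∀ ε > (0 : ℝ), ∀ T > (0 : ℝ), IsETChain φ ε T x y

set_option linter.unusedSectionVars false

section Aux
variable {N : ℕ} {S : Fin N → Type*} [∀ i, Fintype (S i)]

noncomputable def ubound (u : (∀ j, S j) → Fin N → ℝ) : ℝ :=
  ∑ p : (∀ j, S j), ∑ i, |u p i|

lemma ubound_nonneg (u : (∀ j, S j) → Fin N → ℝ) : 0 ≤ ubound u := by
  apply Finset.sum_nonneg; intro p _; apply Finset.sum_nonneg; intro i _; positivity

lemma abs_u_le_ubound (u : (∀ j, S j) → Fin N → ℝ) (p : ∀ j, S j) (i : Fin N) :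
    |u p i| ≤ ubound u := by
  calc |u p i| ≤ ∑ i, |u p i| :=
        Finset.single_le_sum (f := fun i => |u p i|) (fun _ _ => abs_nonneg _) (mem_univ i)
    _ ≤ ubound u := by
        rw [ubound]
        exact Finset.single_le_sum (f := fun p => ∑ i, |u p i|)
          (fun _ _ => Finset.sum_nonneg fun _ _ => abs_nonneg _) (mem_univ p)

lemma sum_prod_eq_one {x : ∀ j, S j → ℝ} (hx : MixedProfile x) (i : Fin N) :
    ∑ q : (∀ j : {j : Fin N // j ≠ i}, S j), ∏ j : {j : Fin N // j ≠ i}, x j (q j) = 1 := by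
  classical
  rw [← Fintype.piFinset_univ, ← Finset.prod_univ_sum]
  simp [hx.2]

lemma abs_Upure_le {u : (∀ j, S j) → Fin N → ℝ} {x : ∀ j, S j → ℝ} (hx : MixedProfile x)
    (p : Fin N) (s : S p) : |Upure u x p s| ≤ ubound u := by
  classical
  have hprod : ∀ q : (∀ j : {j : Fin N // j ≠ p}, S j), 0 ≤ ∏ j : {j : Fin N // j ≠ p}, x j (q j) :=
    fun q => Finset.prod_nonneg fun j _ => hx.1 _ _
  calc |Upure u x p s| ≤ ∑ q : (∀ j : {j : Fin N // j ≠ p}, S j),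
        |(∏ j : {j : Fin N // j ≠ p}, x j (q j)) * u (insertStrat p s q) p| :=
          Finset.abs_sum_le_sum_abs _ _
    _ ≤ ∑ q : (∀ j : {j : Fin N // j ≠ p}, S j),
        (∏ j : {j : Fin N // j ≠ p}, x j (q j)) * ubound u := by
        apply Finset.sum_le_sum; intro q _
        rw [abs_mul, abs_of_nonneg (hprod q)]
        exact mul_le_mul_of_nonneg_left (abs_u_le_ubound u _ p) (hprod q)
    _ = ubound u := by rw [← Finset.sum_mul, sum_prod_eq_one hx, one_mul]

lemma abs_replicator_le {u : (∀ j, S j) → Fin N → ℝ} {x : ∀ j, S j → ℝ} (hx : MixedProfile x)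
    (p : Fin N) (s : S p) : |replicator u x p s| ≤ 2 * ubound u * x p s := by
  rw [replicator, abs_mul, abs_of_nonneg (hx.1 p s), mul_comm (2 * ubound u)]
  apply mul_le_mul_of_nonneg_left _ (hx.1 p s)
  have h1 : |∑ t : S p, x p t * Upure u x p t| ≤ ubound u := by
    calc |∑ t : S p, x p t * Upure u x p t| ≤ ∑ t : S p, |x p t * Upure u x p t| :=
          Finset.abs_sum_le_sum_abs _ _
      _ ≤ ∑ t : S p, x p t * ubound u := by
          apply Finset.sum_le_sum; intro t _
          rw [abs_mul, abs_of_nonneg (hx.1 p t)]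
          exact mul_le_mul_of_nonneg_left (abs_Upure_le hx p t) (hx.1 p t)
      _ = ubound u := by rw [← Finset.sum_mul, hx.2, one_mul]
  calc |Upure u x p s - ∑ t : S p, x p t * Upure u x p t|
      ≤ |Upure u x p s| + |∑ t : S p, x p t * Upure u x p t| := abs_sub _ _
    _ ≤ ubound u + ubound u := add_le_add (abs_Upure_le hx p s) h1
    _ = 2 * ubound u := by ring

end Aux

section Flow
variable {N : ℕ} {S : Fin N → Type*} [∀ i, Fintype (S i)] [∀ i, DecidableEq (S i)]
variable {u : (∀ j, S j) → Fin N → ℝ} {φ : (∀ j, S j → ℝ) → ℝ → (∀ j, S j → ℝ)}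

lemma zero_invariant
    (hmem : ∀ x, MixedProfile x → ∀ t : ℝ, MixedProfile (φ x t))
    (hderiv : ∀ x, MixedProfile x → ∀ (t : ℝ) (p : Fin N) (s : S p),
      HasDerivAt (fun τ => φ x τ p s) (replicator u (φ x t) p s) t)
    (hflow0 : ∀ x, φ x 0 = x)
    {x : ∀ j, S j → ℝ} (hx : MixedProfile x) {t : ℝ} (ht : 0 ≤ t)
    {p : Fin N} {s : S p} (hxs : x p s = 0) : φ x t p s = 0 := by
  classical
  set K := 2 * ubound u with hK
  set h : ℝ → ℝ := fun τ => ∑ p : Fin N, ∑ s : S p, if x p s = 0 then φ x τ p s else 0 with hh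
  set h' : ℝ → ℝ := fun τ => ∑ p : Fin N, ∑ s : S p,
      if x p s = 0 then replicator u (φ x τ) p s else 0 with hh'
  have hder : ∀ τ, HasDerivAt h (h' τ) τ := by
    intro τ
    apply HasDerivAt.fun_sum; intro p _
    apply HasDerivAt.fun_sum; intro s _
    by_cases hc : x p s = 0
    · simp only [if_pos hc]; exact hderiv x hx τ p s
    · simp only [if_neg hc]; exact hasDerivAt_const τ 0
  have hnonneg : ∀ τ, 0 ≤ h τ := by
    intro τ
    apply Finset.sum_nonneg; intro p _
    apply Finset.sum_nonneg; intro s _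
    split
    · exact (hmem x hx τ).1 p s
    · exact le_refl 0
  have key : ∀ τ ∈ Set.Icc (0:ℝ) t, ‖h τ‖ ≤ gronwallBound 0 K 0 (τ - 0) := by
    apply norm_le_gronwallBound_of_norm_deriv_right_le (f' := h')
    · exact fun τ _ => (hder τ).continuousAt.continuousWithinAt
    · exact fun τ _ => (hder τ).hasDerivWithinAt
    · have : h 0 = 0 := by
        rw [hh]
        simp only [hflow0]
        apply Finset.sum_eq_zero; intro p _
        apply Finset.sum_eq_zero; intro s _
        split
        · assumption
        · rfl
      rw [this, norm_zero]
    · intro τ _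
      have hy := hmem x hx τ
      rw [Real.norm_eq_abs, Real.norm_eq_abs, abs_of_nonneg (hnonneg τ), add_zero]
      calc |h' τ| ≤ ∑ p : Fin N, |∑ s : S p, if x p s = 0 then replicator u (φ x τ) p s else 0| :=
            Finset.abs_sum_le_sum_abs _ _
        _ ≤ ∑ p : Fin N, ∑ s : S p, |if x p s = 0 then replicator u (φ x τ) p s else 0| := by
            apply Finset.sum_le_sum; intro p _; exact Finset.abs_sum_le_sum_abs _ _
        _ ≤ ∑ p : Fin N, ∑ s : S p, (if x p s = 0 then K * φ x τ p s else 0) := by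
            apply Finset.sum_le_sum; intro p _
            apply Finset.sum_le_sum; intro s _
            split
            · rw [hK, mul_comm 2 (ubound u)]
              calc |replicator u (φ x τ) p s| ≤ 2 * ubound u * φ x τ p s :=
                    abs_replicator_le hy p s
                _ = ubound u * 2 * φ x τ p s := by ring
            · simp
        _ = K * h τ := by
            rw [hh, Finset.mul_sum]
            apply Finset.sum_congr rfl; intro p _
            rw [Finset.mul_sum]
            apply Finset.sum_congr rfl; intro s _
            split <;> simp
  have ht0 : h t = 0 := by
    have := key t ⟨ht, le_refl t⟩
    rw [gronwallBound_ε0, Real.norm_eq_abs, abs_of_nonneg (hnonneg t)] at this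
    have h0 := hnonneg t
    nlinarith [Real.exp_pos (K * (t - 0))]
  have h1 : ∀ p : Fin N, ∑ s : S p, (if x p s = 0 then φ x t p s else 0) = 0 := by
    have := (Finset.sum_eq_zero_iff_of_nonneg (fun p _ => Finset.sum_nonneg fun s _ => by
      split
      · exact (hmem x hx t).1 p s
      · exact le_refl 0)).1 ht0
    exact fun p => this p (mem_univ p)
  have h2 := (Finset.sum_eq_zero_iff_of_nonneg (fun s _ => by
      split
      · exact (hmem x hx t).1 p s
      · exact le_refl (0:ℝ))).1 (h1 p) s (mem_univ s)
  rwa [if_pos hxs] at h2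

end Flow

section Vert
variable {N : ℕ} {S : Fin N → Type*} [∀ i, Fintype (S i)] [∀ i, DecidableEq (S i)]

lemma vertex_mixed (v : ∀ j, S j) : MixedProfile (vertex v) := by
  constructor
  · intro i s; simp only [vertex]; split <;> norm_num
  · intro i; simp only [vertex]; simp

lemma eq_one_of_others_zero {y : ∀ j, S j → ℝ} (hy : MixedProfile y) {j : Fin N} {s0 : S j}
    (hz : ∀ s', s' ≠ s0 → y j s' = 0) : y j s0 = 1 := by
  have h1 := hy.2 j
  rw [show ∑ s' : S j, y j s' = ∑ s' : S j, if s' = s0 then y j s' else 0 from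
    Finset.sum_congr rfl fun s' _ => by
      by_cases h : s' = s0
      · rw [if_pos h]
      · rw [if_neg h, hz s' h]] at h1
  rwa [Finset.sum_ite_eq' univ s0 (y j), if_pos (mem_univ s0)] at h1

lemma pair_sum_one {y : ∀ j, S j → ℝ} (hy : MixedProfile y) {j : Fin N} {s0 s1 : S j}
    (hne : s0 ≠ s1) (hz : ∀ s', s' ≠ s0 → s' ≠ s1 → y j s' = 0) :
    y j s0 + y j s1 = 1 := by
  have h1 := hy.2 j
  rw [← Finset.sum_subset (Finset.subset_univ ({s0, s1} : Finset (S j)))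
    (fun s' _ hns => hz s' (fun h => hns (by simp [h])) (fun h => hns (by simp [h])))] at h1
  rwa [Finset.sum_pair hne] at h1

variable {u : (∀ j, S j) → Fin N → ℝ} {φ : (∀ j, S j → ℝ) → ℝ → (∀ j, S j → ℝ)}

lemma vertex_fixed
    (hmem : ∀ x, MixedProfile x → ∀ t : ℝ, MixedProfile (φ x t))
    (hderiv : ∀ x, MixedProfile x → ∀ (t : ℝ) (p : Fin N) (s : S p),
      HasDerivAt (fun τ => φ x τ p s) (replicator u (φ x t) p s) t)
    (hflow0 : ∀ x, φ x 0 = x)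
    (v : ∀ j, S j) {t : ℝ} (ht : 0 ≤ t) : φ (vertex v) t = vertex v := by
  have hz : ∀ (j : Fin N) (s : S j), s ≠ v j → φ (vertex v) t j s = 0 := by
    intro j s hs
    exact zero_invariant hmem hderiv hflow0 (vertex_mixed v) ht (by simp only [vertex, if_neg hs])
  funext j s
  by_cases h : s = v j
  · subst h
    rw [eq_one_of_others_zero (hmem _ (vertex_mixed v) t) (fun s' h' => hz j s' h')]
    simp [vertex]
  · rw [hz j s h]; simp only [vertex, if_neg h]

end Vert

section Seg
variable {N : ℕ} {S : Fin N → Type*} [∀ i, Fintype (S i)] [∀ i, DecidableEq (S i)]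

def seg (p q : ∀ j, S j) (lam : ℝ) : ∀ j, S j → ℝ :=
  fun j s => (1 - lam) * vertex p j s + lam * vertex q j s

lemma seg_zero (p q : ∀ j, S j) : seg p q 0 = vertex p := by
  funext j s; simp [seg]

lemma seg_one (p q : ∀ j, S j) : seg p q 1 = vertex q := by
  funext j s; simp [seg]

lemma seg_mixed (p q : ∀ j, S j) {lam : ℝ} (h0 : 0 ≤ lam) (h1 : lam ≤ 1) :
    MixedProfile (seg p q lam) := by
  constructor
  · intro j s
    have hp := (vertex_mixed p).1 j s
    have hq := (vertex_mixed q).1 j s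
    have h2 : (0:ℝ) ≤ 1 - lam := by linarith
    exact add_nonneg (mul_nonneg h2 hp) (mul_nonneg h0 hq)
  · intro j
    simp only [seg, Finset.sum_add_distrib, ← Finset.mul_sum]
    rw [(vertex_mixed p).2 j, (vertex_mixed q).2 j]
    ring

lemma dist_seg_le (p q : ∀ j, S j) (a b : ℝ) : dist (seg p q a) (seg p q b) ≤ |a - b| := by
  rw [dist_pi_le_iff (abs_nonneg _)]
  intro j
  rw [dist_pi_le_iff (abs_nonneg _)]
  intro s
  rw [Real.dist_eq]
  have : seg p q a j s - seg p q b j s = (a - b) * (vertex q j s - vertex p j s) := by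
    simp only [seg]; ring
  rw [this, abs_mul]
  have : |vertex q j s - vertex p j s| ≤ 1 := by
    simp only [vertex]; split_ifs <;> norm_num
  calc |a - b| * |vertex q j s - vertex p j s| ≤ |a - b| * 1 :=
        mul_le_mul_of_nonneg_left this (abs_nonneg _)
    _ = |a - b| := mul_one _

variable {u : (∀ j, S j) → Fin N → ℝ} {φ : (∀ j, S j → ℝ) → ℝ → (∀ j, S j → ℝ)}
variable {i : Fin N} {p q : ∀ j, S j}

lemma insertStrat_self (i : Fin N) (v : ∀ j, S j) :
    insertStrat i (v i) (fun j => v j.1) = v := by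
  funext j
  by_cases h : j = i
  · subst h; simp [insertStrat]
  · simp [insertStrat, h]

lemma insertStrat_other (hq : ∀ j, j ≠ i → p j = q j) :
    insertStrat i (q i) (fun j => p j.1) = q := by
  funext j
  by_cases h : j = i
  · subst h; simp [insertStrat]
  · simp [insertStrat, h, hq j h]

lemma seg_apply_ne (hq : ∀ j, j ≠ i → p j = q j) (m : ℝ) {j : Fin N} (hj : j ≠ i) (s : S j) :
    seg p q m j s = vertex p j s := by
  simp only [seg, vertex, ← hq j hj]
  split <;> ring

lemma Upure_seg (hq : ∀ j, j ≠ i → p j = q j) (m : ℝ) (s : S i) :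
    Upure u (seg p q m) i s = u (insertStrat i s (fun j => p j.1)) i := by
  classical
  rw [Upure]
  have h1 : ∀ qq : (∀ j : {j : Fin N // j ≠ i}, S j),
      (∏ j : {j : Fin N // j ≠ i}, seg p q m j (qq j))
        = if qq = (fun j : {j : Fin N // j ≠ i} => p j.1) then 1 else 0 := by
    intro qq
    have h2 : ∀ j : {j : Fin N // j ≠ i}, seg p q m j (qq j)
        = if qq j = p j.1 then 1 else 0 := by
      intro j
      rw [seg_apply_ne hq m j.2]
      simp only [vertex]
    rw [Finset.prod_congr rfl (fun j _ => h2 j), Finset.prod_boole]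
    congr 1
    simp [funext_iff]
  rw [Finset.sum_congr rfl (fun qq _ => by rw [h1 qq, ite_mul, one_mul, zero_mul]),
    Finset.sum_ite_eq' univ _ (fun qq => u (insertStrat i s qq) i), if_pos (mem_univ _)]

lemma replicator_seg (hcomp : IComparable i p q) (m : ℝ) :
    replicator u (seg p q m) i (q i) = m * (1 - m) * (u q i - u p i) := by
  classical
  have hU : ∀ s : S i, Upure u (seg p q m) i s = u (insertStrat i s (fun j => p j.1)) i :=
    Upure_seg hcomp.2 m
  have hsum : ∑ t : S i, seg p q m i t * Upure u (seg p q m) i t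
      = (1 - m) * u p i + m * u q i := by
    have step : ∀ t : S i, seg p q m i t * Upure u (seg p q m) i t
        = (1 - m) * (if t = p i then u (insertStrat i t (fun j => p j.1)) i else 0)
          + m * (if t = q i then u (insertStrat i t (fun j => p j.1)) i else 0) := by
      intro t
      rw [hU t]
      simp only [seg, vertex]
      split_ifs <;> ring
    rw [Finset.sum_congr rfl (fun t _ => step t), Finset.sum_add_distrib,
      ← Finset.mul_sum, ← Finset.mul_sum, Finset.sum_ite_eq' univ (p i), Finset.sum_ite_eq' univ (q i),
      if_pos (mem_univ _), if_pos (mem_univ _), insertStrat_self, insertStrat_other hcomp.2]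
  have hm : seg p q m i (q i) = m := by
    simp only [seg, vertex]
    rw [if_neg (Ne.symm hcomp.1)]
    simp
  rw [replicator, hm, hU, insertStrat_other hcomp.2, hsum]
  ring

lemma flow_seg
    (hmem : ∀ x, MixedProfile x → ∀ t : ℝ, MixedProfile (φ x t))
    (hderiv : ∀ x, MixedProfile x → ∀ (t : ℝ) (p : Fin N) (s : S p),
      HasDerivAt (fun τ => φ x τ p s) (replicator u (φ x t) p s) t)
    (hflow0 : ∀ x, φ x 0 = x)
    (hcomp : IComparable i p q) {d : ℝ} (hd0 : 0 ≤ d) (hd1 : d ≤ 1)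
    {t : ℝ} (ht : 0 ≤ t) :
    φ (seg p q d) t = seg p q (φ (seg p q d) t i (q i)) := by
  classical
  have hmix : MixedProfile (seg p q d) := seg_mixed p q hd0 hd1
  have hymix : MixedProfile (φ (seg p q d) t) := hmem _ hmix t
  set y := φ (seg p q d) t with hy
  set m := y i (q i) with hm
  have hzero : ∀ (j : Fin N) (s : S j), seg p q d j s = 0 → y j s = 0 :=
    fun j s hs => zero_invariant hmem hderiv hflow0 hmix ht hs
  have hzne : ∀ (j : Fin N), j ≠ i → ∀ s : S j, s ≠ p j → y j s = 0 := by
    intro j hj s hs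
    apply hzero
    rw [seg_apply_ne hcomp.2 d hj, vertex, if_neg hs]
  have hzi : ∀ s : S i, s ≠ p i → s ≠ q i → y i s = 0 := by
    intro s hs1 hs2
    apply hzero
    simp only [seg, vertex, if_neg hs1, if_neg hs2]
    ring
  funext j s
  by_cases hj : j = i
  · subst hj
    by_cases h1 : s = q j
    · subst h1
      simp only [seg, vertex]
      rw [if_neg (Ne.symm hcomp.1)]
      simp
      exact hm.symm
    · by_cases h2 : s = p j
      · subst h2
        have hpair : y j (p j) + y j (q j) = 1 :=
          pair_sum_one hymix hcomp.1 (fun s' ha hb => hzi s' ha hb)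
        simp only [seg, vertex]
        rw [if_neg hcomp.1]
        rw [← hm] at hpair
        simp only [if_true, if_pos rfl, mul_one, mul_zero, add_zero]
        linarith [hpair]
      · rw [hzi s h2 h1]
        simp only [seg, vertex]
        rw [if_neg h2, if_neg h1]
        ring
  · by_cases h2 : s = p j
    · subst h2
      have h1 : y j (p j) = 1 := eq_one_of_others_zero hymix (fun s' hs' => hzne j hj s' hs')
      rw [h1, seg_apply_ne hcomp.2 _ hj, vertex, if_pos rfl]
    · rw [hzne j hj s h2, seg_apply_ne hcomp.2 _ hj, vertex, if_neg h2]

end Seg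

section Arc
variable {N : ℕ} {S : Fin N → Type*} [∀ i, Fintype (S i)] [∀ i, DecidableEq (S i)]
variable {u : (∀ j, S j) → Fin N → ℝ} {φ : (∀ j, S j → ℝ) → ℝ → (∀ j, S j → ℝ)}

lemma coord_le_one {y : ∀ j, S j → ℝ} (hy : MixedProfile y) (j : Fin N) (s : S j) :
    y j s ≤ 1 := by
  have := Finset.single_le_sum (f := y j) (fun s' _ => hy.1 j s') (mem_univ s)
  rw [hy.2 j] at this
  exact this

lemma seg_apply_qi {i : Fin N} {p q : ∀ j, S j} (hne : p i ≠ q i) (d : ℝ) :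
    seg p q d i (q i) = d := by
  simp only [seg, vertex]
  rw [if_neg (Ne.symm hne)]
  simp

lemma arc_pseudo
    (hflow0 : ∀ x, φ x 0 = x)
    (hmem : ∀ x, MixedProfile x → ∀ t : ℝ, MixedProfile (φ x t))
    (hderiv : ∀ x, MixedProfile x → ∀ (t : ℝ) (p : Fin N) (s : S p),
      HasDerivAt (fun τ => φ x τ p s) (replicator u (φ x t) p s) t)
    {i : Fin N} {p q : ∀ j, S j} (hcomp : IComparable i p q) (hle : u p i ≤ u q i) :
    Pseudo φ (vertex p) (vertex q) := by
  classical
  intro ε hε T hT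
  set c : ℝ := u q i - u p i with hc
  have hc0 : 0 ≤ c := by rw [hc]; linarith
  -- the coordinate function μ starting at seg p q d
  have key : ∀ d : ℝ, 0 ≤ d → d ≤ 1 → ∀ τ : ℝ,
      HasDerivAt (fun σ => φ (seg p q d) σ i (q i))
        (replicator u (φ (seg p q d) τ) i (q i)) τ :=
    fun d h0 h1 τ => hderiv _ (seg_mixed p q h0 h1) τ i (q i)
  have hval : ∀ d : ℝ, 0 ≤ d → d ≤ 1 → ∀ τ : ℝ, 0 ≤ τ →
      replicator u (φ (seg p q d) τ) i (q i)
        = (φ (seg p q d) τ i (q i)) * (1 - φ (seg p q d) τ i (q i)) * c := by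
    intro d h0 h1 τ hτ
    conv_lhs => rw [flow_seg hmem hderiv hflow0 hcomp h0 h1 hτ]
    rw [replicator_seg hcomp]
  have hμ0 : ∀ d : ℝ, 0 ≤ d → d ≤ 1 → φ (seg p q d) 0 i (q i) = d := by
    intro d h0 h1
    rw [hflow0, seg_apply_qi hcomp.1]
  have hμmem : ∀ d : ℝ, 0 ≤ d → d ≤ 1 → ∀ τ : ℝ,
      0 ≤ φ (seg p q d) τ i (q i) ∧ φ (seg p q d) τ i (q i) ≤ 1 := by
    intro d h0 h1 τ
    have h := hmem _ (seg_mixed p q h0 h1) τ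
    exact ⟨h.1 i (q i), coord_le_one h i (q i)⟩
  -- monotonicity of μ on [0,∞)
  have hmono : ∀ d : ℝ, 0 ≤ d → d ≤ 1 →
      MonotoneOn (fun σ => φ (seg p q d) σ i (q i)) (Set.Ici (0:ℝ)) := by
    intro d h0 h1
    apply monotoneOn_of_deriv_nonneg (convex_Ici 0)
    · exact fun τ _ => ((key d h0 h1 τ).continuousAt).continuousWithinAt
    · exact fun τ _ => ((key d h0 h1 τ).differentiableAt).differentiableWithinAt
    · intro τ hτ
      rw [interior_Ici] at hτ
      rw [(key d h0 h1 τ).deriv, hval d h0 h1 τ (le_of_lt hτ)]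
      have := hμmem d h0 h1 τ
      have h2 : 0 ≤ 1 - φ (seg p q d) τ i (q i) := by linarith [this.2]
      exact mul_nonneg (mul_nonneg this.1 h2) hc0
  by_cases hczero : c = 0
  · -- all segment points are fixed; chain of small jumps
    have hfix : ∀ d : ℝ, 0 ≤ d → d ≤ 1 → ∀ τ : ℝ, 0 ≤ τ → φ (seg p q d) τ = seg p q d := by
      intro d h0 h1 τ hτ
      have hanti : AntitoneOn (fun σ => φ (seg p q d) σ i (q i)) (Set.Ici (0:ℝ)) := by
        apply antitoneOn_of_deriv_nonpos (convex_Ici 0)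
        · exact fun σ _ => ((key d h0 h1 σ).continuousAt).continuousWithinAt
        · exact fun σ _ => ((key d h0 h1 σ).differentiableAt).differentiableWithinAt
        · intro σ hσ
          rw [interior_Ici] at hσ
          rw [(key d h0 h1 σ).deriv, hval d h0 h1 σ (le_of_lt hσ), hczero, mul_zero]
      have hconst : φ (seg p q d) τ i (q i) = d := by
        have h1' : d ≤ φ (seg p q d) τ i (q i) := by
          simpa [hμ0 d h0 h1] using hmono d h0 h1 (Set.self_mem_Ici) (Set.mem_Ici.2 hτ) hτ
        have h2' : φ (seg p q d) τ i (q i) ≤ d := by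
          simpa [hμ0 d h0 h1] using hanti (Set.self_mem_Ici) (Set.mem_Ici.2 hτ) hτ
        exact le_antisymm h2' h1'
      rw [flow_seg hmem hderiv hflow0 hcomp h0 h1 hτ, hconst]
    obtain ⟨n, hn⟩ := exists_nat_one_div_lt hε
    refine ⟨n + 1, fun k => seg p q (k / (n + 1)), fun _ => T, by omega, ?_, ?_, ?_⟩
    · norm_num [seg_zero]
    · show seg p q (((n+1 : ℕ):ℝ) / ((n:ℝ)+1)) = vertex q
      have hpos : ((n:ℝ)+1) ≠ 0 := by positivity
      rw [show (((n+1:ℕ)):ℝ) / ((n:ℝ)+1) = 1 by push_cast; field_simp, seg_one]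
    · intro k hk
      refine ⟨le_refl T, ?_⟩
      have hkn : (k:ℝ) ≤ (n:ℝ) := by exact_mod_cast Nat.lt_succ_iff.1 hk
      have hd0 : (0:ℝ) ≤ (k:ℝ)/((n:ℝ)+1) := by positivity
      have hd1 : (k:ℝ)/((n:ℝ)+1) ≤ 1 := by
        rw [div_le_one (by positivity)]; linarith
      rw [hfix _ hd0 hd1 T (le_of_lt hT)]
      calc dist (seg p q ((k:ℝ)/((n:ℝ)+1))) (seg p q (((k+1:ℕ):ℝ)/((n:ℝ)+1)))
          ≤ |(k:ℝ)/((n:ℝ)+1) - ((k+1:ℕ):ℝ)/((n:ℝ)+1)| := dist_seg_le p q _ _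
        _ = 1/((n:ℝ)+1) := by
            push_cast
            rw [div_sub_div_same, show (k:ℝ) - ((k:ℝ)+1) = -1 by ring]
            rw [abs_div, abs_neg, abs_one, abs_of_pos (by positivity : (0:ℝ) < (n:ℝ)+1)]
        _ < ε := hn
  · -- c > 0 : two-step chain through seg p q δ
    have hcpos : 0 < c := lt_of_le_of_ne hc0 (Ne.symm hczero)
    set δ : ℝ := min (ε/2) (1/2) with hδ
    have hδ0 : 0 < δ := by
      apply lt_min (by linarith) (by norm_num)
    have hδ1 : δ ≤ 1 := le_trans (min_le_right _ _) (by norm_num)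
    have hδhalf : δ ≤ 1/2 := min_le_right _ _
    have hδε : δ ≤ ε/2 := min_le_left _ _
    set μ : ℝ → ℝ := fun σ => φ (seg p q δ) σ i (q i) with hμ
    have hμd : ∀ τ, HasDerivAt μ (replicator u (φ (seg p q δ) τ) i (q i)) τ :=
      key δ (le_of_lt hδ0) hδ1
    have hμlow : ∀ τ : ℝ, 0 ≤ τ → δ ≤ μ τ := by
      intro τ hτ
      simpa [hμ0 δ (le_of_lt hδ0) hδ1] using
        hmono δ (le_of_lt hδ0) hδ1 (Set.self_mem_Ici) (Set.mem_Ici.2 hτ) hτ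
    -- exponential decay of 1 - μ
    set g : ℝ → ℝ := fun σ => Real.exp (c * δ * σ) * (1 - μ σ) with hg
    have hgd : ∀ τ, HasDerivAt g
        (Real.exp (c * δ * τ) * (c * δ) * (1 - μ τ)
          + Real.exp (c * δ * τ) * (-(replicator u (φ (seg p q δ) τ) i (q i)))) τ := by
      intro τ
      have h1 : HasDerivAt (fun σ => Real.exp (c * δ * σ)) (Real.exp (c * δ * τ) * (c * δ)) τ := by
        simpa using ((hasDerivAt_id τ).const_mul (c * δ)).exp
      have h2 : HasDerivAt (fun σ => 1 - μ σ)
          (-(replicator u (φ (seg p q δ) τ) i (q i))) τ :=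
        (hμd τ).const_sub 1
      exact h1.mul h2
    have hganti : AntitoneOn g (Set.Ici (0:ℝ)) := by
      apply antitoneOn_of_deriv_nonpos (convex_Ici 0)
      · exact fun τ _ => ((hgd τ).continuousAt).continuousWithinAt
      · exact fun τ _ => ((hgd τ).differentiableAt).differentiableWithinAt
      · intro τ hτ
        rw [interior_Ici] at hτ
        rw [(hgd τ).deriv, hval δ (le_of_lt hδ0) hδ1 τ (le_of_lt hτ)]
        have hmm := hμmem δ (le_of_lt hδ0) hδ1 τ
        have hlow := hμlow τ (le_of_lt hτ)
        have hexp := Real.exp_pos (c * δ * τ)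
        have hfact : Real.exp (c * δ * τ) * (c * δ) * (1 - μ τ)
            + Real.exp (c * δ * τ) * (-(μ τ * (1 - μ τ) * c))
            = Real.exp (c * δ * τ) * c * (1 - μ τ) * (δ - μ τ) := by
          simp only [hμ]; ring
        rw [hfact]
        have h1m : 0 ≤ 1 - μ τ := by
          have := hmm.2; simp only [hμ] at *; linarith
        have hdm : δ - μ τ ≤ 0 := by linarith
        have : 0 ≤ Real.exp (c * δ * τ) * c * (1 - μ τ) := by positivity
        exact mul_nonpos_of_nonneg_of_nonpos this hdm
    have hdecay : ∀ τ : ℝ, 0 ≤ τ → 1 - μ τ ≤ (1 - δ) * Real.exp (-(c * δ * τ)) := by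
      intro τ hτ
      have h0' : Real.exp (c * δ * τ) * (1 - μ τ) ≤ 1 - δ := by
        have h0 := hganti (Set.self_mem_Ici) (Set.mem_Ici.2 hτ) hτ
        simpa [hg, hμ, hμ0 δ (le_of_lt hδ0) hδ1] using h0
      have hexp := Real.exp_pos (c * δ * τ)
      rw [Real.exp_neg, ← sub_nonneg]
      have h2 : (1 - δ) * (Real.exp (c * δ * τ))⁻¹ - (1 - μ τ)
          = ((1 - δ) - Real.exp (c * δ * τ) * (1 - μ τ)) * (Real.exp (c * δ * τ))⁻¹ := by
        field_simp
      rw [h2]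
      apply mul_nonneg _ (le_of_lt (inv_pos.2 hexp))
      linarith
    -- pick a time t1 with T ≤ t1 and (1-δ) exp(-(cδ t1)) < ε
    have htend : Filter.Tendsto (fun τ : ℝ => (1 - δ) * Real.exp (-(c * δ * τ)))
        Filter.atTop (nhds 0) := by
      have h1 : Filter.Tendsto (fun τ : ℝ => c * δ * τ) Filter.atTop Filter.atTop :=
        Filter.Tendsto.const_mul_atTop (by positivity) Filter.tendsto_id
      have h2 := Real.tendsto_exp_neg_atTop_nhds_zero.comp h1
      have h3 := h2.const_mul (1 - δ)
      simpa using h3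
    obtain ⟨t1, ht1T, ht1ε⟩ := ((Filter.eventually_ge_atTop T).and
      (htend.eventually_lt_const hε)).exists
    have ht10 : 0 ≤ t1 := le_trans (le_of_lt hT) ht1T
    refine ⟨2, fun k => match k with | 0 => vertex p | 1 => seg p q δ | _ => vertex q,
      fun k => match k with | 0 => T | _ => t1, one_le_two, rfl, rfl, ?_⟩
    intro k hk
    interval_cases k
    · refine ⟨le_refl T, ?_⟩
      show dist (φ (vertex p) T) (seg p q δ) < ε
      rw [vertex_fixed hmem hderiv hflow0 p (le_of_lt hT)]
      rw [← seg_zero p q]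
      calc dist (seg p q 0) (seg p q δ) ≤ |0 - δ| := dist_seg_le p q 0 δ
        _ = δ := by rw [abs_sub_comm, sub_zero, abs_of_pos hδ0]
        _ < ε := by linarith
    · refine ⟨ht1T, ?_⟩
      show dist (φ (seg p q δ) t1) (vertex q) < ε
      rw [flow_seg hmem hderiv hflow0 hcomp (le_of_lt hδ0) hδ1 ht10]
      rw [← seg_one p q]
      have hmm := hμmem δ (le_of_lt hδ0) hδ1 t1
      calc dist (seg p q (φ (seg p q δ) t1 i (q i))) (seg p q 1)
          ≤ |φ (seg p q δ) t1 i (q i) - 1| := dist_seg_le p q _ _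
        _ = 1 - μ t1 := by
            rw [abs_sub_comm]
            exact abs_of_nonneg (by linarith [hmm.2])
        _ ≤ (1 - δ) * Real.exp (-(c * δ * t1)) := hdecay t1 ht10
        _ < ε := ht1ε

lemma chain_trans {ε T : ℝ} {x y z : ∀ j, S j → ℝ}
    (h1 : IsETChain φ ε T x y) (h2 : IsETChain φ ε T y z) : IsETChain φ ε T x z := by
  obtain ⟨n1, z1, t1, hn1, hz10, hz1n, hstep1⟩ := h1
  obtain ⟨n2, z2, t2, hn2, hz20, hz2n, hstep2⟩ := h2
  refine ⟨n1 + n2, fun k => if k < n1 then z1 k else z2 (k - n1),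
    fun k => if k < n1 then t1 k else t2 (k - n1), by omega, ?_, ?_, ?_⟩
  · beta_reduce
    rw [if_pos (by omega : 0 < n1)]; exact hz10
  · beta_reduce
    rw [if_neg (by omega : ¬ n1 + n2 < n1), show n1 + n2 - n1 = n2 by omega]; exact hz2n
  · intro k hk
    beta_reduce
    by_cases h : k < n1
    · rw [if_pos h, if_pos h]
      refine ⟨(hstep1 k h).1, ?_⟩
      by_cases h' : k + 1 < n1
      · rw [if_pos h']; exact (hstep1 k h).2
      · rw [if_neg h', show k + 1 - n1 = 0 by omega, hz20, ← hz1n,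
          show n1 = k + 1 by omega]
        exact (hstep1 k h).2
    · rw [if_neg h, if_neg h, if_neg (by omega : ¬ k + 1 < n1),
        show k + 1 - n1 = (k - n1) + 1 by omega]
      exact hstep2 (k - n1) (by omega)

lemma pseudo_refl_vertex
    (hflow0 : ∀ x, φ x 0 = x)
    (hmem : ∀ x, MixedProfile x → ∀ t : ℝ, MixedProfile (φ x t))
    (hderiv : ∀ x, MixedProfile x → ∀ (t : ℝ) (p : Fin N) (s : S p),
      HasDerivAt (fun τ => φ x τ p s) (replicator u (φ x t) p s) t)
    (v : ∀ j, S j) : Pseudo φ (vertex v) (vertex v) := by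
  intro ε hε T hT
  refine ⟨1, fun _ => vertex v, fun _ => T, le_refl 1, rfl, rfl, ?_⟩
  intro k hk
  refine ⟨le_refl T, ?_⟩
  rw [vertex_fixed hmem hderiv hflow0 v (le_of_lt hT), dist_self]
  exact hε

end Arc

set_option linter.unusedVariables false in
/-- if there is a directed path from `v` to `w` in the response graph,
then under the replicator flow there is a pseudo-orbit from `v` to `w` (viewing pure
profiles as vertices of the product of simplices). -/
theorem path_implies_pseudo_orbit {N : ℕ} {S : Fin N → Type*}
    [∀ i, Fintype (S i)] [∀ i, DecidableEq (S i)]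
    (u : (∀ j, S j) → Fin N → ℝ)
    (φ : (∀ j, S j → ℝ) → ℝ → (∀ j, S j → ℝ))
    (hflow0 : ∀ x, φ x 0 = x)
    (hflowadd : ∀ x s t, φ (φ x s) t = φ x (s + t))
    (hmem : ∀ x, MixedProfile x → ∀ t : ℝ, MixedProfile (φ x t))
    (hderiv : ∀ x, MixedProfile x → ∀ (t : ℝ) (p : Fin N) (s : S p),
      HasDerivAt (fun τ => φ x τ p s) (replicator u (φ x t) p s) t)
    (v w : ∀ j, S j) (hpath : Relation.ReflTransGen (ResponseArc u) v w) :
    Pseudo φ (vertex v) (vertex w) := by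
  induction hpath with
  | refl => exact pseudo_refl_vertex hflow0 hmem hderiv v
  | tail hr harc ih =>
      obtain ⟨i, hcomp, hle⟩ := harc
      have h2 := arc_pseudo hflow0 hmem hderiv hcomp hle
      intro ε hε T hT
      exact chain_trans (ih ε hε T hT) (h2 ε hε T hT)
end

section
/- If Y is an attracting subgame of a finite game (no response-graph arcs leave Y), then the set of mixed profiles supported on Y is an attractor of the replicator flow. -/
open Finset

/-- A set is invariant under the flow `φ`. -/
def IsInvariant' {X : Type*} (φ : X → ℝ → X) (A : Set X) : Prop :=
  ∀ x ∈ A, ∀ t : ℝ, φ x t ∈ A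

/-- `A` is an attractor of `φ`: a compact nonempty invariant set having a
neighbourhood all of whose points converge uniformly to `A`. -/
def IsAttractor {X : Type*} [MetricSpace X] (φ : X → ℝ → X) (A : Set X) : Prop :=
  IsCompact A ∧ A.Nonempty ∧ IsInvariant' φ A ∧
    ∃ U : Set X, IsOpen U ∧ A ⊆ U ∧
      ∀ ε > (0 : ℝ), ∃ T : ℝ, ∀ t ≥ T, ∀ x ∈ U, Metric.infDist (φ x t) A < ε

section AuxAttr

variable {N : ℕ} {S : Fin N → Type*} [∀ i, Fintype (S i)] [∀ i, DecidableEq (S i)]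
  (u : (∀ j, S j) → Fin N → ℝ) (Y : ∀ i, Finset (S i))

omit [∀ i, DecidableEq (S i)] in
lemma continuous_Upure (p : Fin N) (s : S p) :
    Continuous fun x : ∀ j, S j → ℝ => Upure u x p s := by
  unfold Upure
  refine continuous_finset_sum _ fun q _ => Continuous.mul ?_ continuous_const
  exact continuous_finset_prod _ fun j _ =>
    (continuous_apply (q j)).comp (continuous_apply (j : Fin N))

variable (hattr : ∀ (p : Fin N) (s : S p), s ∉ Y p → ∀ t ∈ Y p,
      ∀ q : (∀ j : {j : Fin N // j ≠ p}, S j), (∀ j : {j : Fin N // j ≠ p}, q j ∈ Y ↑j) →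
        u (insertStrat p s q) p < u (insertStrat p t q) p)

include hattr in
lemma Upure_lt {x : ∀ j, S j → ℝ} (hx : MixedProfile x)
    (hxA : ∀ p (s : S p), s ∉ Y p → x p s = 0)
    (p : Fin N) {s t : S p} (hs : s ∉ Y p) (ht : t ∈ Y p) :
    Upure u x p s < Upure u x p t := by
  have hw : ∀ q : (∀ j : {j : Fin N // j ≠ p}, S j),
      0 ≤ ∏ j : {j : Fin N // j ≠ p}, x ↑j (q j) :=
    fun q => Finset.prod_nonneg fun j _ => hx.1 _ _
  have hsupp : ∀ q : (∀ j : {j : Fin N // j ≠ p}, S j),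
      0 < ∏ j : {j : Fin N // j ≠ p}, x ↑j (q j) →
      ∀ j : {j : Fin N // j ≠ p}, q j ∈ Y ↑j := by
    intro q hq j
    by_contra hj
    have h0 : (∏ j : {j : Fin N // j ≠ p}, x ↑j (q j)) = 0 :=
      Finset.prod_eq_zero (mem_univ j) (hxA _ _ hj)
    linarith
  apply Finset.sum_lt_sum
  · intro q _
    rcases (hw q).eq_or_lt with h | h
    · rw [← h]; simp
    · exact mul_le_mul_of_nonneg_left (hattr p s hs t ht q (hsupp q h)).le h.le
  · have hsum1 : ∑ q : (∀ j : {j : Fin N // j ≠ p}, S j),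
        ∏ j : {j : Fin N // j ≠ p}, x ↑j (q j) = 1 := by
      have h := Finset.prod_univ_sum (fun j : {j : Fin N // j ≠ p} => (univ : Finset (S ↑j)))
        (fun j r => x ↑j r)
      rw [Fintype.piFinset_univ] at h
      rw [← h]
      exact Finset.prod_eq_one fun j _ => hx.2 ↑j
    obtain ⟨q, -, hq⟩ := Finset.exists_lt_of_sum_lt
      (show ∑ _q : (∀ j : {j : Fin N // j ≠ p}, S j), (0:ℝ) <
          ∑ q : (∀ j : {j : Fin N // j ≠ p}, S j),
            ∏ j : {j : Fin N // j ≠ p}, x ↑j (q j) by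
        rw [hsum1]; simp)
    exact ⟨q, mem_univ q, mul_lt_mul_of_pos_left (hattr p s hs t ht q (hsupp q hq)) hq⟩

include hattr in
lemma Gf_neg {x : ∀ j, S j → ℝ} (hx : MixedProfile x)
    (hxA : ∀ p (s : S p), s ∉ Y p → x p s = 0)
    (p : Fin N) {s : S p} (hs : s ∉ Y p) :
    Upure u x p s - ∑ t : S p, x p t * Upure u x p t < 0 := by
  have h1 : Upure u x p s = ∑ t : S p, x p t * Upure u x p s := by
    rw [← Finset.sum_mul, hx.2 p, one_mul]
  have h2 : ∑ t : S p, x p t * Upure u x p s < ∑ t : S p, x p t * Upure u x p t := by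
    apply Finset.sum_lt_sum
    · intro t _
      by_cases ht : t ∈ Y p
      · exact mul_le_mul_of_nonneg_left (Upure_lt u Y hattr hx hxA p hs ht).le (hx.1 p t)
      · rw [hxA p t ht]; simp
    · obtain ⟨t, ht, hpos⟩ : ∃ t ∈ Y p, 0 < x p t := by
        have hY : ∑ t ∈ Y p, x p t = 1 := by
          rw [Finset.sum_subset (Finset.subset_univ (Y p)) (fun t _ htY => hxA p t htY)]
          exact hx.2 p
        obtain ⟨t, ht, h⟩ := Finset.exists_lt_of_sum_lt
          (show ∑ _t ∈ Y p, (0:ℝ) < ∑ t ∈ Y p, x p t by rw [hY]; simp)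
        exact ⟨t, ht, h⟩
      exact ⟨t, mem_univ t, mul_lt_mul_of_pos_left (Upure_lt u Y hattr hx hxA p hs ht) hpos⟩
  linarith

omit [∀ i, DecidableEq (S i)] in
lemma isCompact_mixed : IsCompact {x : ∀ j, S j → ℝ | MixedProfile x} := by
  have hsub : {x : ∀ j, S j → ℝ | MixedProfile x} ⊆
      Set.pi Set.univ (fun j => Set.pi Set.univ (fun _ : S j => Set.Icc (0:ℝ) 1)) := by
    intro x hx
    rw [Set.mem_univ_pi]
    intro j
    rw [Set.mem_univ_pi]
    intro s
    refine ⟨hx.1 j s, ?_⟩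
    calc x j s ≤ ∑ r : S j, x j r :=
          Finset.single_le_sum (fun r _ => hx.1 j r) (mem_univ s)
      _ = 1 := hx.2 j
  have hclosed : IsClosed {x : ∀ j, S j → ℝ | MixedProfile x} := by
    have heq : {x : ∀ j, S j → ℝ | MixedProfile x} =
        (⋂ (j) (s : S j), {x : ∀ j, S j → ℝ | 0 ≤ x j s}) ∩
          (⋂ j, {x : ∀ j, S j → ℝ | ∑ s : S j, x j s = 1}) := by
      ext x
      simp only [Set.mem_setOf_eq, Set.mem_inter_iff, Set.mem_iInter, MixedProfile]
      try tauto
    rw [heq]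
    exact IsClosed.inter
      (isClosed_iInter fun j => isClosed_iInter fun s =>
        isClosed_le continuous_const ((continuous_apply s).comp (continuous_apply j)))
      (isClosed_iInter fun j => isClosed_eq
        (continuous_finset_sum _ fun s _ => (continuous_apply s).comp (continuous_apply j))
        continuous_const)
  exact IsCompact.of_isClosed_subset
    (isCompact_univ_pi fun j => isCompact_univ_pi fun _ => isCompact_Icc) hclosed hsub

end AuxAttr

lemma zero_of_hasDerivAt_mul_nonneg (f h : ℝ → ℝ)
    (hd : ∀ τ, HasDerivAt f (f τ * h τ) τ) (hh : Continuous h)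
    (h0 : f 0 = 0) {t : ℝ} (ht : 0 ≤ t) : f t = 0 := by
  obtain ⟨C, hC⟩ := (isCompact_Icc (a := (0:ℝ)) (b := t)).exists_bound_of_continuousOn
    hh.continuousOn
  have hb := norm_le_gronwallBound_of_norm_deriv_right_le
    (f := f) (f' := fun τ => f τ * h τ) (δ := 0) (K := C) (ε := 0) (a := 0) (b := t)
    (fun τ _ => (hd τ).continuousAt.continuousWithinAt)
    (fun τ _ => (hd τ).hasDerivWithinAt)
    (by simp [h0])
    (fun τ hτ => by
      have h1 := hC τ ⟨hτ.1, hτ.2.le⟩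
      rw [norm_mul]
      nlinarith [norm_nonneg (f τ), norm_nonneg (h τ)])
    t ⟨ht, le_rfl⟩
  rw [gronwallBound_ε0_δ0] at hb
  simpa using le_antisymm hb (norm_nonneg _)

lemma zero_of_hasDerivAt_mul (f h : ℝ → ℝ)
    (hd : ∀ τ, HasDerivAt f (f τ * h τ) τ) (hh : Continuous h)
    (h0 : f 0 = 0) (t : ℝ) : f t = 0 := by
  rcases le_total 0 t with ht | ht
  · exact zero_of_hasDerivAt_mul_nonneg f h hd hh h0 ht
  · have hneg : ∀ τ, HasDerivAt (fun σ : ℝ => f (-σ)) (f (-τ) * (-h (-τ))) τ := by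
      intro τ
      have h2 := (hd (-τ)).comp τ ((hasDerivAt_id τ).neg)
      rw [show f (-τ) * -h (-τ) = f (-τ) * h (-τ) * -1 by ring]
      exact h2
    have := zero_of_hasDerivAt_mul_nonneg (fun σ => f (-σ)) (fun σ => -h (-σ)) hneg
      ((hh.comp continuous_neg).neg) (by simpa using h0) (t := -t) (by linarith)
    simpa using this

/-- if `Y` is an attracting subgame (every response-graph arc from a
profile in `Y` stays in `Y`, i.e. strategies outside `Y` get strictly smaller payoff
against `Y`-antiprofiles), then the set of mixed profiles supported on `Y` is an
attractor of the replicator flow. -/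
theorem attracting_subgame_is_attractor {N : ℕ} {S : Fin N → Type*}
    [∀ i, Fintype (S i)] [∀ i, DecidableEq (S i)]
    (u : (∀ j, S j) → Fin N → ℝ)
    (Y : ∀ i, Finset (S i)) (hYne : ∀ i, (Y i).Nonempty)
    (hattr : ∀ (p : Fin N) (s : S p), s ∉ Y p → ∀ t ∈ Y p,
      ∀ q : (∀ j : {j : Fin N // j ≠ p}, S j), (∀ j : {j : Fin N // j ≠ p}, q j ∈ Y ↑j) →
        u (insertStrat p s q) p < u (insertStrat p t q) p)
    (φ : {x : ∀ j, S j → ℝ // MixedProfile x} → ℝ → {x : ∀ j, S j → ℝ // MixedProfile x})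
    (hflow0 : ∀ x, φ x 0 = x)
    (hflowadd : ∀ x s t, φ (φ x s) t = φ x (s + t))
    (hcont : Continuous fun p : {x : ∀ j, S j → ℝ // MixedProfile x} × ℝ => φ p.1 p.2)
    (hderiv : ∀ x (t : ℝ) (p : Fin N) (s : S p),
      HasDerivAt (fun τ => (φ x τ : ∀ j, S j → ℝ) p s)
        (replicator u (φ x t : ∀ j, S j → ℝ) p s) t) :
    IsAttractor φ
      {x : {x : ∀ j, S j → ℝ // MixedProfile x} |
        ∀ (p : Fin N) (s : S p), s ∉ Y p → (x : ∀ j, S j → ℝ) p s = 0} := by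
  classical
  haveI hMcompact : CompactSpace {x : ∀ j, S j → ℝ // MixedProfile x} :=
    isCompact_iff_compactSpace.mp (isCompact_mixed (S := S))
  set A : Set {x : ∀ j, S j → ℝ // MixedProfile x} :=
    {x | ∀ (p : Fin N) (s : S p), s ∉ Y p → (x : ∀ j, S j → ℝ) p s = 0} with hAdef
  -- continuity helpers
  have hevalc : ∀ (p : Fin N) (s : S p),
      Continuous fun x : {x : ∀ j, S j → ℝ // MixedProfile x} => (x : ∀ j, S j → ℝ) p s :=
    fun p s => (continuous_apply s).comp ((continuous_apply p).comp continuous_subtype_val)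
  have hGc : ∀ (p : Fin N) (s : S p), Continuous fun x : ∀ j, S j → ℝ =>
      Upure u x p s - ∑ t : S p, x p t * Upure u x p t :=
    fun p s => (continuous_Upure u p s).sub (continuous_finset_sum _ fun t _ =>
      ((continuous_apply t).comp (continuous_apply p)).fun_mul (continuous_Upure u p t))
  -- the Lyapunov-ish function V
  set V : (∀ j, S j → ℝ) → ℝ := fun x => ∑ p : Fin N, ∑ s ∈ (Y p)ᶜ, x p s with hVdef
  have hVc : Continuous V := continuous_finset_sum _ fun p _ =>
    continuous_finset_sum _ fun s _ => (continuous_apply s).comp (continuous_apply p)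
  have hVnonneg : ∀ x : {x : ∀ j, S j → ℝ // MixedProfile x}, 0 ≤ V x.1 := fun x =>
    Finset.sum_nonneg fun p _ => Finset.sum_nonneg fun s _ => x.2.1 p s
  have hVzero : ∀ x : {x : ∀ j, S j → ℝ // MixedProfile x}, x ∈ A ↔ V x.1 = 0 := by
    intro x
    constructor
    · intro hx
      exact Finset.sum_eq_zero fun p _ => Finset.sum_eq_zero fun s hs =>
        hx p s (Finset.mem_compl.mp hs)
    · intro hx p s hs
      have h1 := (Finset.sum_eq_zero_iff_of_nonneg
        (fun p _ => Finset.sum_nonneg fun s _ => x.2.1 p s)).mp hx p (mem_univ p)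
      exact (Finset.sum_eq_zero_iff_of_nonneg (fun s _ => x.2.1 p s)).mp h1 s
        (Finset.mem_compl.mpr hs)
  have hcoordV : ∀ (x : {x : ∀ j, S j → ℝ // MixedProfile x}) (p) (s : S p),
      s ∉ Y p → x.1 p s ≤ V x.1 := by
    intro x p s hs
    calc x.1 p s ≤ ∑ r ∈ (Y p)ᶜ, x.1 p r :=
          Finset.single_le_sum (fun r _ => x.2.1 p r) (Finset.mem_compl.mpr hs)
      _ ≤ V x.1 :=
          Finset.single_le_sum (f := fun q => ∑ r ∈ (Y q)ᶜ, x.1 q r)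
            (fun q _ => Finset.sum_nonneg fun r _ => x.2.1 q r) (mem_univ p)
  -- A is compact
  have hAclosed : IsClosed A := by
    have heq : A = ⋂ (p : Fin N), ⋂ (s : S p),
        {x : {x : ∀ j, S j → ℝ // MixedProfile x} | s ∉ Y p → (x : ∀ j, S j → ℝ) p s = 0} := by
      ext x; simp [hAdef, Set.mem_iInter]
    rw [heq]
    refine isClosed_iInter fun p => isClosed_iInter fun s => ?_
    by_cases hs : s ∈ Y p
    · convert isClosed_univ
      ext x; simp [hs]
    · have heq2 : {x : {x : ∀ j, S j → ℝ // MixedProfile x} |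
          s ∉ Y p → (x : ∀ j, S j → ℝ) p s = 0} =
          {x : {x : ∀ j, S j → ℝ // MixedProfile x} | (x : ∀ j, S j → ℝ) p s = 0} := by
        ext x; simp [hs]
      rw [heq2]
      exact isClosed_eq (hevalc p s) continuous_const
  have hAcompact : IsCompact A := hAclosed.isCompact
  -- A is nonempty
  set y0 : ∀ j, S j → ℝ := fun i t => if t = (hYne i).choose then (1:ℝ) else 0 with hy0def
  have hy0m : MixedProfile y0 := by
    constructor
    · intro i s
      dsimp [y0]
      split <;> norm_num
    · intro i
      simp [y0]
  have hAne : A.Nonempty := by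
    refine ⟨⟨y0, hy0m⟩, fun p s hs => ?_⟩
    dsimp [y0]
    rw [if_neg]
    intro h
    exact hs (h ▸ (hYne p).choose_spec)
  -- flow continuity in time
  have hφc : ∀ x : {x : ∀ j, S j → ℝ // MixedProfile x}, Continuous fun τ => φ x τ :=
    fun x => hcont.comp (continuous_const.prodMk continuous_id)
  -- invariance of A
  have hAinv : IsInvariant' φ A := by
    intro x hx t p s hs
    have hd : ∀ τ : ℝ, HasDerivAt (fun τ => (φ x τ : ∀ j, S j → ℝ) p s)
        ((φ x τ : ∀ j, S j → ℝ) p s *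
          (Upure u (φ x τ : ∀ j, S j → ℝ) p s -
            ∑ r : S p, (φ x τ : ∀ j, S j → ℝ) p r * Upure u (φ x τ : ∀ j, S j → ℝ) p r)) τ :=
      fun τ => hderiv x τ p s
    exact zero_of_hasDerivAt_mul _ _ hd
      ((hGc p s).comp (continuous_subtype_val.comp (hφc x)))
      (by rw [hflow0]; exact hx p s hs) t
  -- the payoff gap is uniformly negative on A
  have hGneg : ∀ (p : Fin N) (s : S p), s ∉ Y p → ∃ d : ℝ, 0 < d ∧
      ∀ x ∈ A, Upure u x.1 p s - ∑ t : S p, x.1 p t * Upure u x.1 p t ≤ -d := by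
    intro p s hs
    obtain ⟨z, hzA, hz⟩ := hAcompact.exists_isMaxOn hAne
      (((hGc p s).comp continuous_subtype_val).continuousOn)
    refine ⟨-(Upure u z.1 p s - ∑ t : S p, z.1 p t * Upure u z.1 p t), ?_, ?_⟩
    · have := Gf_neg u Y hattr z.2 hzA p hs
      linarith
    · intro x hx
      have := hz hx
      simp only [Set.mem_setOf_eq, Function.comp] at this
      linarith [this]
  set P := {e : Σ p : Fin N, S p // e.2 ∉ Y e.1} with hPdef
  have hchoice : ∀ e : P, ∃ d : ℝ, 0 < d ∧ ∀ x ∈ A,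
      Upure u x.1 e.1.1 e.1.2 - ∑ t : S e.1.1, x.1 e.1.1 t * Upure u x.1 e.1.1 t ≤ -d :=
    fun e => hGneg e.1.1 e.1.2 e.2
  choose d hd0 hdle using hchoice
  set δ : ℝ := (insert (1:ℝ) (Finset.univ.image d)).min' (Finset.insert_nonempty _ _)
    with hδdef
  have hδpos : 0 < δ := by
    rw [hδdef]
    apply (Finset.lt_min'_iff _ _).mpr
    intro y hy
    rcases Finset.mem_insert.mp hy with h | h
    · rw [h]; norm_num
    · obtain ⟨e, -, rfl⟩ := Finset.mem_image.mp h
      exact hd0 e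
  have hδle : ∀ e : P, δ ≤ d e := fun e =>
    Finset.min'_le _ _ (Finset.mem_insert.mpr (Or.inr (Finset.mem_image_of_mem d (mem_univ e))))
  set c : ℝ := δ / 2 with hcdef
  have hcpos : 0 < c := half_pos hδpos
  -- the open region O where the gap is < -c
  set O : Set {x : ∀ j, S j → ℝ // MixedProfile x} := {x | ∀ (p : Fin N) (s : S p), s ∉ Y p →
      Upure u x.1 p s - ∑ t : S p, x.1 p t * Upure u x.1 p t < -c} with hOdef
  have hOopen : IsOpen O := by
    have heq : O = ⋂ (p : Fin N), ⋂ (s : S p), {x : {x : ∀ j, S j → ℝ // MixedProfile x} |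
        s ∉ Y p → Upure u x.1 p s - ∑ t : S p, x.1 p t * Upure u x.1 p t < -c} := by
      ext x; simp [hOdef, Set.mem_iInter]
    rw [heq]
    refine isOpen_iInter_of_finite fun p => isOpen_iInter_of_finite fun s => ?_
    by_cases hs : s ∈ Y p
    · convert isOpen_univ
      ext x; simp [hs]
    · have heq2 : {x : {x : ∀ j, S j → ℝ // MixedProfile x} |
          s ∉ Y p → Upure u x.1 p s - ∑ t : S p, x.1 p t * Upure u x.1 p t < -c} =
          {x : {x : ∀ j, S j → ℝ // MixedProfile x} |
          Upure u x.1 p s - ∑ t : S p, x.1 p t * Upure u x.1 p t < -c} := by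
        ext x; simp [hs]
      rw [heq2]
      exact isOpen_lt ((hGc p s).comp continuous_subtype_val) continuous_const
  have hAO : A ⊆ O := by
    intro x hx p s hs
    have h1 := hdle ⟨⟨p, s⟩, hs⟩ x hx
    have h2 := hδle ⟨⟨p, s⟩, hs⟩
    have h3 := hd0 (⟨⟨p, s⟩, hs⟩ : P)
    rw [hcdef]
    linarith
  -- find η with {V ≤ η} ⊆ O
  obtain ⟨η, hηpos, hηO⟩ : ∃ η : ℝ, 0 < η ∧
      ∀ x : {x : ∀ j, S j → ℝ // MixedProfile x}, V x.1 ≤ η → x ∈ O := by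
    by_cases hOc : (Oᶜ : Set {x : ∀ j, S j → ℝ // MixedProfile x}) = ∅
    · refine ⟨1, one_pos, fun x _ => ?_⟩
      by_contra hx
      have : x ∈ (Oᶜ : Set {x : ∀ j, S j → ℝ // MixedProfile x}) := hx
      rw [hOc] at this
      exact this
    · have hOcne : (Oᶜ : Set {x : ∀ j, S j → ℝ // MixedProfile x}).Nonempty :=
        Set.nonempty_iff_ne_empty.mpr hOc
      have hOccomp : IsCompact (Oᶜ : Set {x : ∀ j, S j → ℝ // MixedProfile x}) :=
        (hOopen.isClosed_compl).isCompact
      obtain ⟨z, hz, hzmin⟩ := hOccomp.exists_isMinOn hOcne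
        ((hVc.comp continuous_subtype_val).continuousOn)
      have hz0 : 0 < V z.1 := by
        rcases (hVnonneg z).lt_or_eq with h | h
        · exact h
        · exact absurd (hAO ((hVzero z).mpr h.symm)) hz
      refine ⟨V z.1 / 2, half_pos hz0, fun x hx => ?_⟩
      by_contra hxO
      have h1 : V z.1 ≤ V x.1 := hzmin hxO
      linarith
  -- the neighbourhood U
  set U : Set {x : ∀ j, S j → ℝ // MixedProfile x} := {x | V x.1 < η} with hUdef
  have hUopen : IsOpen U := isOpen_lt (hVc.comp continuous_subtype_val) continuous_const
  have hAU : A ⊆ U := by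
    intro x hx
    show V x.1 < η
    rw [(hVzero x).mp hx]
    exact hηpos
  -- the key exponential decay estimate
  have key : ∀ x ∈ U, ∀ t : ℝ, 0 ≤ t → V (φ x t).1 ≤ V x.1 * Real.exp (-c * t) := by
    intro x hxU t ht
    by_contra hcon
    push_neg at hcon
    set Bad : Set ℝ := {τ | 0 ≤ τ ∧ V x.1 * Real.exp (-c * τ) < V (φ x τ).1} with hBaddef
    have hBadne : Bad.Nonempty := ⟨t, ht, hcon⟩
    have hBadbdd : BddBelow Bad := ⟨0, fun τ hτ => hτ.1⟩
    set T : ℝ := sInf Bad with hTdef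
    have hT0 : 0 ≤ T := le_csInf hBadne fun τ hτ => hτ.1
    have hVφc : Continuous fun τ : ℝ => V (φ x τ).1 :=
      hVc.comp (continuous_subtype_val.comp (hφc x))
    have hIco : ∀ τ ∈ Set.Ico (0:ℝ) T, V (φ x τ).1 ≤ V x.1 * Real.exp (-c * τ) := by
      intro τ hτ
      by_contra hb
      push_neg at hb
      exact absurd (csInf_le hBadbdd ⟨hτ.1, hb⟩) (not_le.mpr hτ.2)
    have hgoodT : V (φ x T).1 ≤ V x.1 * Real.exp (-c * T) := by
      rcases eq_or_lt_of_le hT0 with h0 | h0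
      · rw [← h0, hflow0]
        simp
      · have hclosedset : IsClosed {τ : ℝ | V (φ x τ).1 - V x.1 * Real.exp (-c * τ) ≤ 0} :=
          isClosed_le (hVφc.sub (continuous_const.mul
            (Real.continuous_exp.comp (continuous_const.mul continuous_id)))) continuous_const
        have hsub2 : Set.Ico (0:ℝ) T ⊆
            {τ : ℝ | V (φ x τ).1 - V x.1 * Real.exp (-c * τ) ≤ 0} :=
          fun τ hτ => sub_nonpos.mpr (hIco τ hτ)
        have hcl := hclosedset.closure_subset_iff.mpr hsub2
        have hTin : T ∈ closure (Set.Ico (0:ℝ) T) := by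
          rw [closure_Ico h0.ne]
          exact ⟨hT0, le_rfl⟩
        have := hcl hTin
        simp only [Set.mem_setOf_eq] at this
        linarith
    have hgood : ∀ τ ∈ Set.Icc (0:ℝ) T, V (φ x τ).1 ≤ V x.1 * Real.exp (-c * τ) := by
      intro τ hτ
      rcases hτ.2.lt_or_eq with h | h
      · exact hIco τ ⟨hτ.1, h⟩
      · rw [h]; exact hgoodT
    have hW : ∀ τ ∈ Set.Icc (0:ℝ) T, V (φ x τ).1 < η := by
      intro τ hτ
      have h1 := hgood τ hτ
      have h2 : Real.exp (-c * τ) ≤ 1 := Real.exp_le_one_iff.mpr (by nlinarith [hτ.1])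
      have h3 : V x.1 * Real.exp (-c * τ) ≤ V x.1 * 1 :=
        mul_le_mul_of_nonneg_left h2 (hVnonneg x)
      have h4 : V x.1 < η := hxU
      nlinarith
    obtain ⟨ε', hε'pos, hball⟩ := Metric.isOpen_iff.mp
      (isOpen_lt hVφc continuous_const : IsOpen {τ : ℝ | V (φ x τ).1 < η}) T
      (hW T ⟨hT0, le_rfl⟩)
    set b : ℝ := T + ε' / 2 with hbdef
    have hb0 : 0 ≤ b := by rw [hbdef]; linarith
    have hWb : ∀ τ ∈ Set.Icc (0:ℝ) b, V (φ x τ).1 < η := by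
      intro τ hτ
      rcases le_or_gt τ T with h | h
      · exact hW τ ⟨hτ.1, h⟩
      · apply hball
        rw [Metric.mem_ball, Real.dist_eq, abs_lt]
        have := hτ.2
        rw [hbdef] at this
        constructor <;> linarith
    have hOb : ∀ τ ∈ Set.Icc (0:ℝ) b, φ x τ ∈ O :=
      fun τ hτ => hηO _ (hWb τ hτ).le
    have hcoord : ∀ (p : Fin N) (s : S p), s ∉ Y p → ∀ τ ∈ Set.Icc (0:ℝ) b,
        (φ x τ).1 p s ≤ x.1 p s * Real.exp (-c * τ) := by
      intro p s hs
      set g : ℝ → ℝ := fun τ => (φ x τ).1 p s * Real.exp (c * τ) with hgdef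
      have hgderiv : ∀ τ : ℝ, HasDerivAt g
          (((φ x τ).1 p s * (Upure u (φ x τ).1 p s -
              ∑ r : S p, (φ x τ).1 p r * Upure u (φ x τ).1 p r)) * Real.exp (c * τ)
            + (φ x τ).1 p s * (Real.exp (c * τ) * c)) τ := by
        intro τ
        have h1 : HasDerivAt (fun τ => (φ x τ : ∀ j, S j → ℝ) p s)
            ((φ x τ).1 p s * (Upure u (φ x τ).1 p s -
              ∑ r : S p, (φ x τ).1 p r * Upure u (φ x τ).1 p r)) τ := hderiv x τ p s
        have h2 : HasDerivAt (fun τ : ℝ => Real.exp (c * τ)) (Real.exp (c * τ) * c) τ := by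
          have h3 := (Real.hasDerivAt_exp (c * τ)).comp τ ((hasDerivAt_id τ).const_mul c)
          simp at h3; exact h3
        exact h1.mul h2
      have hgcont : Continuous g := ((hevalc p s).comp (hφc x)).mul
        (Real.continuous_exp.comp (continuous_const.mul continuous_id))
      have hant : AntitoneOn g (Set.Icc 0 b) := by
        apply antitoneOn_of_deriv_nonpos (convex_Icc 0 b) hgcont.continuousOn
          (fun τ _ => (hgderiv τ).differentiableAt.differentiableWithinAt)
        intro τ hτ
        rw [interior_Icc] at hτ
        rw [(hgderiv τ).deriv]
        have hneg := hOb τ ⟨hτ.1.le, hτ.2.le⟩ p s hs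
        have hf0 : 0 ≤ (φ x τ).1 p s := (φ x τ).2.1 p s
        have hexp : 0 < Real.exp (c * τ) := Real.exp_pos _
        nlinarith [mul_le_mul_of_nonneg_right
          (mul_nonpos_of_nonneg_of_nonpos hf0 (by linarith :
            Upure u (φ x τ).1 p s - ∑ r : S p, (φ x τ).1 p r * Upure u (φ x τ).1 p r + c ≤ 0))
          hexp.le]
      intro τ hτ
      have h1 : g τ ≤ g 0 := hant (Set.left_mem_Icc.mpr hb0) hτ hτ.1
      have hg0 : g 0 = x.1 p s := by
        rw [hgdef]
        simp [hflow0]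
      have hE : Real.exp (c * τ) * Real.exp (-c * τ) = 1 := by
        rw [← Real.exp_add]
        ring_nf
        exact Real.exp_zero
      have hEpos : 0 < Real.exp (-c * τ) := Real.exp_pos _
      rw [hg0] at h1
      have h2 := mul_le_mul_of_nonneg_right h1 hEpos.le
      simp only [hgdef] at h2
      have h3 : (φ x τ).1 p s * (Real.exp (c * τ) * Real.exp (-c * τ)) = (φ x τ).1 p s := by
        rw [hE, mul_one]
      nlinarith [h2, h3]
    have hdecay : ∀ τ ∈ Set.Icc (0:ℝ) b, V (φ x τ).1 ≤ V x.1 * Real.exp (-c * τ) := by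
      intro τ hτ
      calc V (φ x τ).1 = ∑ p : Fin N, ∑ s ∈ (Y p)ᶜ, (φ x τ).1 p s := rfl
        _ ≤ ∑ p : Fin N, ∑ s ∈ (Y p)ᶜ, x.1 p s * Real.exp (-c * τ) :=
            Finset.sum_le_sum fun p _ => Finset.sum_le_sum fun s hsc =>
              hcoord p s (Finset.mem_compl.mp hsc) τ hτ
        _ = V x.1 * Real.exp (-c * τ) := by
            rw [hVdef]
            rw [Finset.sum_mul]
            exact Finset.sum_congr rfl fun p _ => by rw [Finset.sum_mul]
    have hnotbad : ∀ τ ∈ Set.Icc (0:ℝ) b, τ ∉ Bad :=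
      fun τ hτ hbad => absurd (hdecay τ hτ) (not_le.mpr hbad.2)
    have hTb : b ≤ T := le_csInf hBadne (fun τ hτ => by
      by_contra hlt
      push_neg at hlt
      exact hnotbad τ ⟨hτ.1, hlt.le⟩ hτ)
    rw [hbdef] at hTb
    linarith
  -- distance to A is bounded by V
  have hproj : ∀ z : {x : ∀ j, S j → ℝ // MixedProfile x}, Metric.infDist z A ≤ V z.1 := by
    intro z
    set out : Fin N → ℝ := fun p => ∑ s ∈ (Y p)ᶜ, z.1 p s with houtdef
    have houtnn : ∀ p, 0 ≤ out p := fun p => Finset.sum_nonneg fun s _ => z.2.1 p s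
    have houtV : ∀ p, out p ≤ V z.1 := fun p =>
      Finset.single_le_sum (f := fun q => ∑ r ∈ (Y q)ᶜ, z.1 q r)
        (fun q _ => Finset.sum_nonneg fun r _ => z.2.1 q r) (mem_univ p)
    set y : ∀ j, S j → ℝ := fun p r =>
      if r ∈ Y p then z.1 p r + (if r = (hYne p).choose then out p else 0) else 0 with hydef
    have hym : MixedProfile y := by
      constructor
      · intro i s
        dsimp [y]
        split
        · split
          · linarith [z.2.1 i s, houtnn i]
          · linarith [z.2.1 i s]
        · exact le_rfl
      · intro i
        have h1 : ∑ s : S i, y i s =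
            ∑ s ∈ Y i, (z.1 i s + if s = (hYne i).choose then out i else 0) := by
          rw [show (∑ s : S i, y i s) = ∑ s : S i,
              if s ∈ Y i then (z.1 i s + if s = (hYne i).choose then out i else 0) else 0
            from rfl]
          rw [Finset.sum_ite_mem, Finset.univ_inter]
        rw [h1, Finset.sum_add_distrib, Finset.sum_ite_eq' (Y i) (hYne i).choose,
          if_pos (hYne i).choose_spec, houtdef, Finset.sum_add_sum_compl]
        exact z.2.2 i
    have hyA : (⟨y, hym⟩ : {x : ∀ j, S j → ℝ // MixedProfile x}) ∈ A := by
      intro p s hs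
      show y p s = 0
      rw [hydef]
      exact if_neg hs
    have hdist : dist z (⟨y, hym⟩ : {x : ∀ j, S j → ℝ // MixedProfile x}) ≤ V z.1 := by
      rw [Subtype.dist_eq]
      rw [dist_pi_le_iff (hVnonneg z)]
      intro p
      rw [dist_pi_le_iff (hVnonneg z)]
      intro s
      rw [Real.dist_eq]
      by_cases hs : s ∈ Y p
      · by_cases hts : s = (hYne p).choose
        · show |z.1 p s - y p s| ≤ V z.1
          rw [hydef]
          simp only [if_pos hs, if_pos hts]
          rw [show z.1 p s - (z.1 p s + out p) = -out p by ring, abs_neg,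
            abs_of_nonneg (houtnn p)]
          exact houtV p
        · show |z.1 p s - y p s| ≤ V z.1
          rw [hydef]
          simp only [if_pos hs, if_neg hts]
          rw [show z.1 p s - (z.1 p s + 0) = 0 by ring, abs_zero]
          exact hVnonneg z
      · show |z.1 p s - y p s| ≤ V z.1
        rw [hydef]
        simp only [if_neg hs]
        rw [sub_zero, abs_of_nonneg (z.2.1 p s)]
        exact hcoordV z p s hs
    calc Metric.infDist z A ≤ dist z ⟨y, hym⟩ := Metric.infDist_le_dist_of_mem hyA
      _ ≤ V z.1 := hdist
  -- assemble
  refine ⟨hAcompact, hAne, hAinv, U, hUopen, hAU, ?_⟩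
  intro ε hε
  have htend : Filter.Tendsto (fun t : ℝ => η * Real.exp (-c * t)) Filter.atTop (nhds 0) := by
    have h1 : Filter.Tendsto (fun t : ℝ => -c * t) Filter.atTop Filter.atBot := by
      have h2 : Filter.Tendsto (fun t : ℝ => c * t) Filter.atTop Filter.atTop :=
        Filter.Tendsto.const_mul_atTop hcpos Filter.tendsto_id
      have h3 := Filter.tendsto_neg_atTop_atBot.comp h2
      convert h3 using 2 with t
      simp [Function.comp]
    have h4 := Real.tendsto_exp_atBot.comp h1
    have h5 := h4.const_mul η
    simpa using h5
  have hev : ∀ᶠ t in Filter.atTop, η * Real.exp (-c * t) < ε :=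
    htend.eventually_lt_const hε
  obtain ⟨T, hT⟩ := Filter.eventually_atTop.mp hev
  refine ⟨max T 0, fun t ht x hxU => ?_⟩
  have ht0 : 0 ≤ t := le_trans (le_max_right T 0) ht
  have h1 := key x hxU t ht0
  calc Metric.infDist (φ x t) A ≤ V (φ x t).1 := hproj _
    _ ≤ V x.1 * Real.exp (-c * t) := h1
    _ ≤ η * Real.exp (-c * t) :=
        mul_le_mul_of_nonneg_right (le_of_lt hxU) (Real.exp_pos _).le
    _ < ε := hT t (le_trans (le_max_left T 0) ht)
end

section
/- A strict pure Nash equilibrium of a finite game is an attractor (as a singleton) of the replicator flow. -/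
open Finset

set_option linter.unusedSectionVars false

section Aux
variable {N : ℕ} {S : Fin N → Type*} [∀ i, Fintype (S i)] [∀ i, DecidableEq (S i)]
  (u : (∀ j, S j) → Fin N → ℝ) (p : ∀ j, S j)

lemma insertStrat_p (i : Fin N) (s : S i) :
    insertStrat i s (fun j : {j : Fin N // j ≠ i} => p j.1) = Function.update p i s := by
  funext j
  unfold insertStrat Function.update
  by_cases h : j = i
  · subst h; simp
  · simp [h]

lemma Upure_vertex (e : ∀ j, S j → ℝ)
    (he : ∀ (i : Fin N) (s : S i), e i s = if s = p i then 1 else 0)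
    (i : Fin N) (s : S i) : Upure u e i s = u (Function.update p i s) i := by
  unfold Upure
  have key : ∀ q : (∀ j : {j : Fin N // j ≠ i}, S j),
      (∏ j : {j : Fin N // j ≠ i}, e j (q j))
        = if q = (fun j : {j : Fin N // j ≠ i} => p j.1) then 1 else 0 := by
    intro q
    by_cases hq : q = (fun j : {j : Fin N // j ≠ i} => p j.1)
    · simp only [hq, if_pos rfl]
      apply Finset.prod_eq_one
      intro j _
      rw [he]; simp
    · rw [if_neg hq]
      obtain ⟨j, hj⟩ : ∃ j : {j : Fin N // j ≠ i}, q j ≠ p j.1 := by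
        by_contra hc
        push_neg at hc
        exact hq (funext hc)
      apply Finset.prod_eq_zero (Finset.mem_univ j)
      rw [he]; simp [hj]
  simp only [key]
  rw [show (∑ q : (∀ j : {j : Fin N // j ≠ i}, S j),
      (if q = (fun j : {j : Fin N // j ≠ i} => p j.1) then 1 else 0) * u (insertStrat i s q) i)
    = ∑ q : (∀ j : {j : Fin N // j ≠ i}, S j),
      (if q = (fun j : {j : Fin N // j ≠ i} => p j.1) then u (insertStrat i s q) i else 0) from
    Finset.sum_congr rfl (fun q _ => by split <;> simp)]
  rw [Finset.sum_ite_eq' Finset.univ _ (fun q => u (insertStrat i s q) i)]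
  simp [insertStrat_p p i s]

lemma upure_cont (i : Fin N) (s : S i) :
    Continuous fun x : ∀ j, S j → ℝ => Upure u x i s := by
  unfold Upure
  apply continuous_finset_sum
  intro q _
  apply Continuous.mul _ continuous_const
  apply continuous_finset_prod
  intro j _
  exact (continuous_apply (q j)).comp (continuous_apply j.1)

lemma upure_bound (M : ℝ) (hM : ∀ a i, |u a i| ≤ M)
    (x : ∀ j, S j → ℝ) (hx : MixedProfile x) (i : Fin N) (s : S i) :
    |Upure u x i s| ≤ M := by
  have hsum : (∑ q : (∀ j : {j : Fin N // j ≠ i}, S j),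
      ∏ j : {j : Fin N // j ≠ i}, x j (q j)) = 1 := by
    classical
    rw [show (∑ q : (∀ j : {j : Fin N // j ≠ i}, S j),
        ∏ j : {j : Fin N // j ≠ i}, x j (q j))
      = ∑ q ∈ Fintype.piFinset (fun _ => Finset.univ),
        ∏ j : {j : Fin N // j ≠ i}, x j (q j) from by
        apply Finset.sum_congr _ (fun _ _ => rfl)
        ext q; simp [Fintype.mem_piFinset]]
    rw [← Finset.prod_univ_sum]
    simp [hx.2]
  calc |Upure u x i s| ≤ ∑ q : (∀ j : {j : Fin N // j ≠ i}, S j),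
        |(∏ j : {j : Fin N // j ≠ i}, x j (q j)) * u (insertStrat i s q) i| :=
        Finset.abs_sum_le_sum_abs _ _
    _ ≤ ∑ q : (∀ j : {j : Fin N // j ≠ i}, S j),
        (∏ j : {j : Fin N // j ≠ i}, x j (q j)) * M := by
        apply Finset.sum_le_sum
        intro q _
        rw [abs_mul]
        have hprod : 0 ≤ ∏ j : {j : Fin N // j ≠ i}, x j (q j) :=
          Finset.prod_nonneg (fun j _ => hx.1 j.1 (q j))
        rw [abs_of_nonneg hprod]
        exact mul_le_mul_of_nonneg_left (hM _ _) hprod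
    _ = M := by rw [← Finset.sum_mul, hsum, one_mul]

lemma replicator_eq (x : ∀ j, S j → ℝ) (hx : MixedProfile x) (i : Fin N) :
    replicator u x i (p i)
      = x i (p i) * ∑ s : S i, x i s * (Upure u x i (p i) - Upure u x i s) := by
  unfold replicator
  congr 1
  rw [Finset.sum_congr rfl (fun s _ => mul_sub (x i s) _ _), Finset.sum_sub_distrib,
    ← Finset.sum_mul, hx.2 i, one_mul]

end Aux


lemma gronwall_le' {g g' : ℝ → ℝ} (hg : ∀ t, HasDerivAt g (g' t) t) {L a b : ℝ} (hab : a ≤ b)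
    (hle : ∀ t ∈ Set.Icc a b, g' t ≤ L * g t) : g b ≤ g a * Real.exp (L * (b - a)) := by
  set ψ : ℝ → ℝ := fun t => g t * Real.exp (-L * t) with hψ
  have hψd : ∀ t, HasDerivAt ψ ((g' t - L * g t) * Real.exp (-L * t)) t := by
    intro t
    have h1 : HasDerivAt (fun t : ℝ => -L * t) (-L) t := by
      simpa using (hasDerivAt_id t).const_mul (-L)
    have h2 := h1.exp
    have h3 := (hg t).mul h2
    exact h3.congr_deriv (by ring)
  have hanti : AntitoneOn ψ (Set.Icc a b) := by
    apply antitoneOn_of_deriv_nonpos (convex_Icc a b)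
    · exact fun t _ => ((hψd t).continuousAt).continuousWithinAt
    · exact fun t ht => ((hψd t).differentiableAt).differentiableWithinAt
    · intro t ht
      rw [(hψd t).deriv]
      rw [interior_Icc] at ht
      have h1 := hle t (Set.mem_Icc.mpr ⟨le_of_lt ht.1, le_of_lt ht.2⟩)
      have h2 : (0:ℝ) < Real.exp (-L * t) := Real.exp_pos _
      nlinarith
  have h3 := hanti (Set.left_mem_Icc.mpr hab) (Set.right_mem_Icc.mpr hab) hab
  have key : Real.exp (-L * b) * Real.exp (L * b) = 1 := by
    rw [← Real.exp_add, show -L * b + L * b = 0 by ring, Real.exp_zero]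
  calc g b = g b * Real.exp (-L * b) * Real.exp (L * b) := by
        rw [mul_assoc, key, mul_one]
    _ ≤ g a * Real.exp (-L * a) * Real.exp (L * b) :=
        mul_le_mul_of_nonneg_right h3 (Real.exp_pos _).le
    _ = g a * Real.exp (L * (b - a)) := by
        rw [mul_assoc, ← Real.exp_add, show -L * a + L * b = L * (b - a) by ring]

lemma gronwall_ge' {g g' : ℝ → ℝ} (hg : ∀ t, HasDerivAt g (g' t) t) {L a b : ℝ} (hab : a ≤ b)
    (hle : ∀ t ∈ Set.Icc a b, L * g t ≤ g' t) : g a * Real.exp (L * (b - a)) ≤ g b := by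
  have h := gronwall_le' (g := fun t => -g t) (g' := fun t => -g' t)
    (L := L) (fun t => (hg t).neg) hab (fun t ht => by show -g' t ≤ L * -g t; linarith [hle t ht])
  simp only [neg_mul] at h
  linarith

/-- a strict pure Nash equilibrium, viewed as a vertex of the strategy
space, is a singleton attractor of the replicator flow. -/
theorem strict_pure_nash_is_attractor {N : ℕ} {S : Fin N → Type*}
    [∀ i, Fintype (S i)] [∀ i, DecidableEq (S i)]
    (u : (∀ j, S j) → Fin N → ℝ)
    (p : ∀ j, S j)
    (hNE : ∀ (i : Fin N) (s : S i), s ≠ p i →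
      u (Function.update p i s) i < u p i)
    (φ : {x : ∀ j, S j → ℝ // MixedProfile x} → ℝ → {x : ∀ j, S j → ℝ // MixedProfile x})
    (hflow0 : ∀ x, φ x 0 = x)
    (hflowadd : ∀ x s t, φ (φ x s) t = φ x (s + t))
    (hcont : Continuous fun q : {x : ∀ j, S j → ℝ // MixedProfile x} × ℝ => φ q.1 q.2)
    (hderiv : ∀ x (t : ℝ) (i : Fin N) (s : S i),
      HasDerivAt (fun τ => (φ x τ : ∀ j, S j → ℝ) i s)
        (replicator u (φ x t : ∀ j, S j → ℝ) i s) t)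
    (e : {x : ∀ j, S j → ℝ // MixedProfile x})
    (he : ∀ (i : Fin N) (s : S i), (e : ∀ j, S j → ℝ) i s = if s = p i then 1 else 0) :
    IsAttractor φ {e} := by
  classical
  rcases Nat.eq_zero_or_pos N with hN | hN
  · -- degenerate case: no players, the whole state space is a single point
    subst hN
    have hall : ∀ x : {x : ∀ j, S j → ℝ // MixedProfile x}, x = e := by
      intro x
      apply Subtype.ext
      funext i
      exact i.elim0
    refine ⟨isCompact_singleton, Set.singleton_nonempty e, ?_, Set.univ, isOpen_univ,
      Set.subset_univ _, ?_⟩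
    · intro x _ t
      simp [hall (φ x t)]
    · intro ε hε
      exact ⟨0, fun t _ x _ => by
        rw [Metric.infDist_singleton, hall (φ x t)]; simpa using hε⟩
  -- general facts about mixed profiles
  have hle1 : ∀ (x : ∀ j, S j → ℝ), MixedProfile x → ∀ (i : Fin N) (s : S i), x i s ≤ 1 := by
    intro x hx i s
    rw [← hx.2 i]
    exact Finset.single_le_sum (fun t _ => hx.1 i t) (Finset.mem_univ s)
  have hres : ∀ (x : ∀ j, S j → ℝ), MixedProfile x → ∀ i : Fin N,
      ∑ s ∈ Finset.univ.erase (p i), x i s = 1 - x i (p i) := by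
    intro x hx i
    have h1 := Finset.sum_erase_add Finset.univ (x i) (Finset.mem_univ (p i))
    have h2 := hx.2 i
    linarith
  have hhnn : ∀ (x : ∀ j, S j → ℝ), MixedProfile x → ∀ i : Fin N, 0 ≤ 1 - x i (p i) := by
    intro x hx i
    rw [← hres x hx i]
    exact Finset.sum_nonneg (fun s _ => hx.1 i s)
  have hoff : ∀ (x : ∀ j, S j → ℝ), MixedProfile x → ∀ (i : Fin N) (s : S i), s ≠ p i →
      x i s ≤ 1 - x i (p i) := by
    intro x hx i s hs
    rw [← hres x hx i]
    exact Finset.single_le_sum (fun t _ => hx.1 i t)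
      (Finset.mem_erase.mpr ⟨hs, Finset.mem_univ s⟩)
  -- the bound on utilities
  set M : ℝ := ∑ a : (∀ j, S j), ∑ i : Fin N, |u a i| with hMdef
  have hM : ∀ (a : ∀ j, S j) (i : Fin N), |u a i| ≤ M := by
    intro a i
    calc |u a i| ≤ ∑ i : Fin N, |u a i| :=
          Finset.single_le_sum (f := fun i : Fin N => |u a i|)
            (fun t _ => abs_nonneg _) (Finset.mem_univ i)
      _ ≤ M := Finset.single_le_sum (f := fun a : ∀ j, S j => ∑ i : Fin N, |u a i|)
          (fun b _ => Finset.sum_nonneg fun t _ => abs_nonneg _) (Finset.mem_univ a)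
  have hM0 : 0 ≤ M := (abs_nonneg _).trans (hM p ⟨0, hN⟩)
  -- bound on the replicator field
  have habs : ∀ (x : {x : ∀ j, S j → ℝ // MixedProfile x}) (i : Fin N),
      |replicator u x.1 i (p i)| ≤ (2 * M) * (1 - x.1 i (p i)) := by
    intro x i
    rw [replicator_eq u p x.1 x.2 i, abs_mul]
    have hx := x.2
    have h1 : |x.1 i (p i)| ≤ 1 :=
      abs_le.mpr ⟨by linarith [hx.1 i (p i)], hle1 _ hx i (p i)⟩
    have h2 : |∑ s : S i, x.1 i s * (Upure u x.1 i (p i) - Upure u x.1 i s)|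
        ≤ 2 * M * (1 - x.1 i (p i)) := by
      calc |∑ s : S i, x.1 i s * (Upure u x.1 i (p i) - Upure u x.1 i s)|
          ≤ ∑ s : S i, |x.1 i s * (Upure u x.1 i (p i) - Upure u x.1 i s)| :=
            Finset.abs_sum_le_sum_abs _ _
        _ = ∑ s : S i, x.1 i s * |Upure u x.1 i (p i) - Upure u x.1 i s| := by
            refine Finset.sum_congr rfl fun s _ => ?_
            rw [abs_mul, abs_of_nonneg (hx.1 i s)]
        _ = x.1 i (p i) * |Upure u x.1 i (p i) - Upure u x.1 i (p i)|
            + ∑ s ∈ Finset.univ.erase (p i),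
              x.1 i s * |Upure u x.1 i (p i) - Upure u x.1 i s| :=
            (Finset.add_sum_erase Finset.univ _ (Finset.mem_univ (p i))).symm
        _ ≤ ∑ s ∈ Finset.univ.erase (p i), x.1 i s * (2 * M) := by
            rw [sub_self, abs_zero, mul_zero, zero_add]
            refine Finset.sum_le_sum fun s _ => ?_
            refine mul_le_mul_of_nonneg_left ?_ (hx.1 i s)
            calc |Upure u x.1 i (p i) - Upure u x.1 i s|
                ≤ |Upure u x.1 i (p i)| + |Upure u x.1 i s| := abs_sub _ _
              _ ≤ 2 * M := by
                  have := upure_bound u M hM x.1 hx i (p i)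
                  have := upure_bound u M hM x.1 hx i s
                  linarith
        _ = 2 * M * (1 - x.1 i (p i)) := by
            rw [← Finset.sum_mul, hres _ hx i]; ring
    calc |x.1 i (p i)| * |∑ s : S i, x.1 i s * (Upure u x.1 i (p i) - Upure u x.1 i s)|
        ≤ 1 * (2 * M * (1 - x.1 i (p i))) :=
          mul_le_mul h1 h2 (abs_nonneg _) zero_le_one
      _ = 2 * M * (1 - x.1 i (p i)) := one_mul _
  -- the derivative of the "distance from the vertex" coordinates
  have hDg : ∀ (x0 : {x : ∀ j, S j → ℝ // MixedProfile x}) (i : Fin N) (τ : ℝ),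
      HasDerivAt (fun τ => 1 - (φ x0 τ : ∀ j, S j → ℝ) i (p i))
        (-(replicator u (φ x0 τ : ∀ j, S j → ℝ) i (p i))) τ := by
    intro x0 i τ
    exact ((hasDerivAt_const τ (1:ℝ)).sub (hderiv x0 τ i (p i))).congr_deriv (by simp)
  have hcont_i : ∀ (x0 : {x : ∀ j, S j → ℝ // MixedProfile x}) (i : Fin N),
      Continuous (fun τ => 1 - (φ x0 τ : ∀ j, S j → ℝ) i (p i)) :=
    fun x0 i => continuous_iff_continuousAt.mpr fun τ => (hDg x0 i τ).continuousAt
  -- invariance of the vertex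
  have hpt : ∀ (τ : ℝ) (i : Fin N), (φ e τ : ∀ j, S j → ℝ) i (p i) = 1 := by
    intro τ i
    have hg0 : 1 - (φ e 0 : ∀ j, S j → ℝ) i (p i) = 0 := by
      rw [hflow0, he]; simp
    have hgnn : ∀ σ : ℝ, 0 ≤ 1 - (φ e σ : ∀ j, S j → ℝ) i (p i) :=
      fun σ => hhnn _ (φ e σ).2 i
    have hzero : 1 - (φ e τ : ∀ j, S j → ℝ) i (p i) = 0 := by
      rcases le_or_gt 0 τ with hτ | hτ
      · have h1 := gronwall_le' (hDg e i) (L := 2 * M) hτ (fun s _ => by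
          have := habs (φ e s) i
          have := neg_le_abs (replicator u (φ e s : ∀ j, S j → ℝ) i (p i))
          linarith)
        rw [hg0] at h1
        simp only [zero_mul] at h1
        linarith [hgnn τ]
      · have h1 := gronwall_ge' (hDg e i) (L := -(2 * M)) hτ.le (fun s _ => by
          have := habs (φ e s) i
          have := le_abs_self (replicator u (φ e s : ∀ j, S j → ℝ) i (p i))
          linarith)
        rw [hg0] at h1
        have h2 : (0:ℝ) < Real.exp (-(2 * M) * (0 - τ)) := Real.exp_pos _
        nlinarith [hgnn τ]
    linarith
  have hinv : ∀ t : ℝ, φ e t = e := by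
    intro t
    apply Subtype.ext
    funext i s
    by_cases hsp : s = p i
    · subst hsp
      rw [hpt t i, he]
      simp
    · have h1 := hoff _ (φ e t).2 i s hsp
      rw [hpt t i] at h1
      have h2 := (φ e t).2.1 i s
      rw [he]
      rw [if_neg hsp]
      linarith
  -- the gap at the vertex
  have hgap : ∀ (i : Fin N) (s : S i), s ≠ p i →
      0 < Upure u e.1 i (p i) - Upure u e.1 i s := by
    intro i s hs
    rw [Upure_vertex u p e.1 he i (p i), Upure_vertex u p e.1 he i s,
      Function.update_eq_self]
    linarith [hNE i s hs]
  -- the constant c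
  haveI : Nonempty (Σ i : Fin N, S i) := ⟨⟨⟨0, hN⟩, p ⟨0, hN⟩⟩⟩
  set c : ℝ := ((Finset.univ : Finset (Σ i : Fin N, S i)).inf' Finset.univ_nonempty
    (fun z => if z.2 = p z.1 then 1 else Upure u e.1 z.1 (p z.1) - Upure u e.1 z.1 z.2)) / 2
    with hcdef
  have hinfpos : 0 < (Finset.univ : Finset (Σ i : Fin N, S i)).inf' Finset.univ_nonempty
      (fun z => if z.2 = p z.1 then 1 else Upure u e.1 z.1 (p z.1) - Upure u e.1 z.1 z.2) := by
    rw [Finset.lt_inf'_iff]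
    intro z _
    by_cases hz : z.2 = p z.1
    · rw [if_pos hz]; norm_num
    · rw [if_neg hz]; exact hgap z.1 z.2 hz
  have hc0 : 0 < c := by rw [hcdef]; linarith
  have hce : ∀ (i : Fin N) (s : S i), s ≠ p i →
      c < Upure u e.1 i (p i) - Upure u e.1 i s := by
    intro i s hs
    have h1 := Finset.inf'_le
      (fun z : Σ i : Fin N, S i =>
        if z.2 = p z.1 then 1 else Upure u e.1 z.1 (p z.1) - Upure u e.1 z.1 z.2)
      (Finset.mem_univ (⟨i, s⟩ : Σ i : Fin N, S i))
    rw [if_neg hs] at h1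
    rw [hcdef]
    linarith
  -- the open set G where the gap is at least c
  set G : Set {x : ∀ j, S j → ℝ // MixedProfile x} :=
    {x | ∀ (i : Fin N) (s : S i), s ≠ p i →
      c < Upure u x.1 i (p i) - Upure u x.1 i s} with hGdef
  have hGopen : IsOpen G := by
    have hGeq : G = Subtype.val ⁻¹' (⋂ (i : Fin N), ⋂ (s : S i), ⋂ (_ : s ≠ p i),
        {y : ∀ j, S j → ℝ | c < Upure u y i (p i) - Upure u y i s}) := by
      ext x
      simp [hGdef, Set.mem_iInter]
    rw [hGeq]
    refine IsOpen.preimage continuous_subtype_val ?_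
    refine isOpen_iInter_of_finite fun i => isOpen_iInter_of_finite fun s =>
      isOpen_iInter_of_finite fun _ => ?_
    exact isOpen_lt continuous_const ((upure_cont u i (p i)).sub (upure_cont u i s))
  have heG : e ∈ G := fun i s hs => hce i s hs
  obtain ⟨ρ, hρ0, hρ⟩ := Metric.isOpen_iff.mp hGopen e heG
  set η : ℝ := min ρ (1/2) with hηdef
  have hη0 : 0 < η := lt_min hρ0 (by norm_num)
  have hη2 : η ≤ 1/2 := min_le_right _ _
  -- distance estimate
  have hdist : ∀ (ε : ℝ), 0 < ε → ∀ x : {x : ∀ j, S j → ℝ // MixedProfile x},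
      (∀ i, 1 - x.1 i (p i) < ε) → dist x e < ε := by
    intro ε hε x hx
    rw [Subtype.dist_eq, dist_pi_lt_iff hε]
    intro i
    rw [dist_pi_lt_iff hε]
    intro s
    rw [Real.dist_eq, he]
    by_cases hsp : s = p i
    · subst hsp
      rw [if_pos rfl, abs_sub_comm, abs_of_nonneg (hhnn _ x.2 i)]
      exact hx i
    · rw [if_neg hsp, sub_zero, abs_of_nonneg (x.2.1 i s)]
      have := hoff _ x.2 i s hsp
      linarith [hx i]
  have hU2G : ∀ x : {x : ∀ j, S j → ℝ // MixedProfile x},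
      (∀ i, 1 - x.1 i (p i) < η) → x ∈ G := by
    intro x hx
    apply hρ
    rw [Metric.mem_ball]
    exact lt_of_lt_of_le (hdist η hη0 x hx) (min_le_left _ _)
  -- the key inequality on G
  have hSig : ∀ x : {x : ∀ j, S j → ℝ // MixedProfile x}, x ∈ G → ∀ i : Fin N,
      c * (1 - x.1 i (p i))
        ≤ ∑ s : S i, x.1 i s * (Upure u x.1 i (p i) - Upure u x.1 i s) := by
    intro x hxG i
    have hsplit := Finset.add_sum_erase Finset.univ
      (fun s => x.1 i s * (Upure u x.1 i (p i) - Upure u x.1 i s)) (Finset.mem_univ (p i))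
    have h1 : ∀ s ∈ Finset.univ.erase (p i),
        c * x.1 i s ≤ x.1 i s * (Upure u x.1 i (p i) - Upure u x.1 i s) := by
      intro s hs
      have hsne : s ≠ p i := (Finset.mem_erase.mp hs).1
      have h2 := hxG i s hsne
      have h3 := x.2.1 i s
      nlinarith
    calc c * (1 - x.1 i (p i)) = ∑ s ∈ Finset.univ.erase (p i), c * x.1 i s := by
          rw [← Finset.mul_sum, hres _ x.2 i]
      _ ≤ ∑ s ∈ Finset.univ.erase (p i),
            x.1 i s * (Upure u x.1 i (p i) - Upure u x.1 i s) := Finset.sum_le_sum h1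
      _ = ∑ s : S i, x.1 i s * (Upure u x.1 i (p i) - Upure u x.1 i s) := by
          rw [← hsplit]; simp
  -- the neighbourhood U
  set U : Set {x : ∀ j, S j → ℝ // MixedProfile x} :=
    {x | ∀ i, 1 - x.1 i (p i) < η} with hUdef
  have hUopen : IsOpen U := by
    have hUeq : U = Subtype.val ⁻¹' (⋂ (i : Fin N),
        {y : ∀ j, S j → ℝ | 1 - y i (p i) < η}) := by
      ext x
      simp [hUdef, Set.mem_iInter]
    rw [hUeq]
    refine IsOpen.preimage continuous_subtype_val ?_
    refine isOpen_iInter_of_finite fun i => ?_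
    exact isOpen_lt (continuous_const.sub
      ((continuous_apply (p i)).comp (continuous_apply i))) continuous_const
  have heU : e ∈ U := by
    intro i
    rw [he]
    simpa using hη0
  -- the main decay estimate
  have hmain : ∀ x0 ∈ U, ∀ t : ℝ, 0 ≤ t → ∀ i : Fin N,
      1 - (φ x0 t : ∀ j, S j → ℝ) i (p i) ≤ η * Real.exp (-(c/2) * t) := by
    intro x0 hx0U
    -- the trajectory stays in U for positive times
    have hstay : ∀ t : ℝ, 0 ≤ t → ∀ i : Fin N,
        1 - (φ x0 t : ∀ j, S j → ℝ) i (p i) < η := by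
      by_contra hcontra
      push_neg at hcontra
      obtain ⟨t1, ht1, i1, hi1⟩ := hcontra
      set B : Set ℝ := Set.Ici 0 ∩ ⋃ i : Fin N,
        {t | η ≤ 1 - (φ x0 t : ∀ j, S j → ℝ) i (p i)} with hB
      have hBne : B.Nonempty := ⟨t1, ht1, Set.mem_iUnion.mpr ⟨i1, hi1⟩⟩
      have hBc : IsClosed B :=
        isClosed_Ici.inter (isClosed_iUnion_of_finite fun i =>
          isClosed_le continuous_const (hcont_i x0 i))
      have hBbdd : BddBelow B := ⟨0, fun t ht => ht.1⟩
      set t0 := sInf B with ht0def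
      have ht0B : t0 ∈ B := hBc.csInf_mem hBne hBbdd
      have ht00 : (0:ℝ) ≤ t0 := ht0B.1
      have hIoo : ∀ τ ∈ Set.Ioo (0:ℝ) t0, ∀ j : Fin N,
          1 - (φ x0 τ : ∀ j, S j → ℝ) j (p j) < η := by
        intro τ hτ j
        by_contra hτc
        push_neg at hτc
        have hτB : τ ∈ B := ⟨le_of_lt hτ.1, Set.mem_iUnion.mpr ⟨j, hτc⟩⟩
        exact absurd (csInf_le hBbdd hτB) (not_le.mpr hτ.2)
      obtain ⟨i, hi⟩ := Set.mem_iUnion.mp ht0B.2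
      have hanti : AntitoneOn (fun τ => 1 - (φ x0 τ : ∀ j, S j → ℝ) i (p i))
          (Set.Icc 0 t0) := by
        apply antitoneOn_of_deriv_nonpos (convex_Icc 0 t0)
          ((hcont_i x0 i).continuousOn)
        · exact fun τ _ => (hDg x0 i τ).differentiableAt.differentiableWithinAt
        · intro τ hτ
          rw [interior_Icc] at hτ
          rw [(hDg x0 i τ).deriv]
          have hGτ : φ x0 τ ∈ G := hU2G _ (hIoo τ hτ)
          have hS := hSig (φ x0 τ) hGτ i
          have hnn := hhnn _ (φ x0 τ).2 i
          have hxp := (φ x0 τ).2.1 i (p i)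
          rw [replicator_eq u p _ (φ x0 τ).2 i]
          have hSnn : (0:ℝ) ≤ ∑ s : S i, (φ x0 τ : ∀ j, S j → ℝ) i s *
              (Upure u (φ x0 τ : ∀ j, S j → ℝ) i (p i)
                - Upure u (φ x0 τ : ∀ j, S j → ℝ) i s) :=
            le_trans (mul_nonneg hc0.le hnn) hS
          linarith [mul_nonneg hxp hSnn]
      have h0 : 1 - (φ x0 0 : ∀ j, S j → ℝ) i (p i) < η := by
        rw [hflow0]; exact hx0U i
      have h1 := hanti (Set.left_mem_Icc.mpr ht00) (Set.right_mem_Icc.mpr ht00) ht00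
      have h1' : 1 - (φ x0 t0 : ∀ j, S j → ℝ) i (p i)
          ≤ 1 - (φ x0 0 : ∀ j, S j → ℝ) i (p i) := h1
      have hi' : η ≤ 1 - (φ x0 t0 : ∀ j, S j → ℝ) i (p i) := hi
      linarith
    -- exponential decay
    intro t ht i
    have hle : ∀ τ ∈ Set.Icc (0:ℝ) t,
        -(replicator u (φ x0 τ : ∀ j, S j → ℝ) i (p i))
          ≤ (-(c/2)) * (1 - (φ x0 τ : ∀ j, S j → ℝ) i (p i)) := by
      intro τ hτ
      have hGτ : φ x0 τ ∈ G := hU2G _ (hstay τ hτ.1)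
      have hS := hSig (φ x0 τ) hGτ i
      have hnn := hhnn _ (φ x0 τ).2 i
      have hst := hstay τ hτ.1 i
      rw [replicator_eq u p _ (φ x0 τ).2 i]
      have hxp : (1:ℝ)/2 ≤ (φ x0 τ : ∀ j, S j → ℝ) i (p i) := by linarith
      nlinarith [mul_nonneg hc0.le hnn]
    have h2 := gronwall_le' (hDg x0 i) (L := -(c/2)) ht hle
    have h3 : 1 - (φ x0 0 : ∀ j, S j → ℝ) i (p i) < η := by
      rw [hflow0]; exact hx0U i
    calc 1 - (φ x0 t : ∀ j, S j → ℝ) i (p i)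
        ≤ (1 - (φ x0 0 : ∀ j, S j → ℝ) i (p i)) * Real.exp (-(c/2) * (t - 0)) := h2
      _ ≤ η * Real.exp (-(c/2) * t) := by
          rw [sub_zero]
          exact mul_le_mul_of_nonneg_right h3.le (Real.exp_pos _).le
  -- assemble the attractor
  refine ⟨isCompact_singleton, Set.singleton_nonempty e, ?_, U, hUopen,
    Set.singleton_subset_iff.mpr heU, ?_⟩
  · intro x hx t
    rw [Set.mem_singleton_iff] at hx ⊢
    rw [hx]
    exact hinv t
  · intro ε hε
    have htend : Filter.Tendsto (fun t : ℝ => η * Real.exp (-(c/2) * t))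
        Filter.atTop (nhds 0) := by
      have h1 : Filter.Tendsto (fun t : ℝ => (c/2) * t) Filter.atTop Filter.atTop :=
        Filter.Tendsto.const_mul_atTop (by linarith) Filter.tendsto_id
      have h2 : Filter.Tendsto (fun t : ℝ => -(c/2) * t) Filter.atTop Filter.atBot := by
        have h2' := Filter.tendsto_neg_atTop_atBot.comp h1
        have heq : (Neg.neg ∘ fun t : ℝ => (c/2) * t) = fun t : ℝ => -(c/2) * t := by
          funext t; simp [Function.comp]
        rwa [heq] at h2'
      have h3 := Real.tendsto_exp_atBot.comp h2
      have h4 := h3.const_mul η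
      simpa using h4
    obtain ⟨T, hT⟩ := Filter.eventually_atTop.mp (htend.eventually_lt_const hε)
    refine ⟨max T 0, fun t ht x0 hx0 => ?_⟩
    rw [Metric.infDist_singleton]
    apply hdist ε hε
    intro i
    have h1 := hmain x0 hx0 t (le_trans (le_max_right T 0) ht) i
    exact lt_of_le_of_lt h1 (hT t (le_trans (le_max_left T 0) ht))
end
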